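/- arXiv:1201.5168 — 2 statements merged into one kernel-verified Lean document; each statement's English description precedes it below -/
import Mathlib

section
/- Suppose T1 and T2 are rooted balanced binary phylogenetic trees of heights m1 and m2, respectively, with |L(T1) ∩ L(T2)| = t > 0. Then for every δ ∈ (0, 1/4), mast{T1, T2} ≥ 2^{g(m1,m2,t)}, where g(m1,m2,t) := ((m1+m2)·log(1−3δ) + log t)/(log(1−3δ) − log δ). -/
/-!
# Rooted binary phylogenetic trees

`RTree L` is the type of rooted binary trees with leaves labelled by elements of `L`:
every internal vertex has exactly two children (a left child and a right child), and
a tree with one leaf is a single vertex.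
-/

inductive RTree (L : Type) : Type
  | leaf : L → RTree L
  | node : RTree L → RTree L → RTree L

namespace RTree

variable {L : Type}

/-- The list of leaf labels of a rooted binary tree, read from left to right. -/
def leafList : RTree L → List L
  | leaf b => [b]
  | node l r => leafList l ++ leafList r

/-- The number of leaves of a rooted binary tree. -/
def numLeaves (T : RTree L) : ℕ := T.leafList.length

/-- The set of leaf labels of a rooted binary tree. -/
def leafSet (T : RTree L) : Set L := {b | b ∈ T.leafList}

/-- The height of a rooted binary tree: the maximum distance from the root to a leaf. -/
def height : RTree L → ℕ
  | leaf _ => 0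
  | node l r => max (height l) (height r) + 1

/-- A rooted binary tree is balanced if all of its leaves are at the same distance
from the root. -/
def IsBalanced : RTree L → Prop
  | leaf _ => True
  | node l r => IsBalanced l ∧ IsBalanced r ∧ height l = height r

/-- A rooted binary tree is phylogenetic if its leaves are labelled bijectively by a
finite set, i.e. all leaf labels are distinct. -/
def IsPhylo (T : RTree L) : Prop := T.leafList.Nodup

/-- `Embeds S T` is the subtree relation `S ⪯ T`: there is an injective map `f` from the
vertices of `S` to the vertices of `T` such that `f x = x` for every leaf `x` of `S`
(leaves being identified across trees by their labels) and
`f (x ∧ y) = f x ∧ f y` for all vertices `x`, `y` of `S`, where `∧` denotes the most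
recent common ancestor.  Equivalently (for trees with distinct leaf labels), `S` is the
restriction of `T` to the leaf set of `S`, up to rooted isomorphism; this structural
characterization is taken as the definition. -/
inductive Embeds : RTree L → RTree L → Prop
  | leaf (b : L) : Embeds (RTree.leaf b) (RTree.leaf b)
  | left {S l r : RTree L} : Embeds S l → Embeds S (RTree.node l r)
  | right {S l r : RTree L} : Embeds S r → Embeds S (RTree.node l r)
  | pair {s₁ s₂ l r : RTree L} :
      Embeds s₁ l → Embeds s₂ r → Embeds (RTree.node s₁ s₂) (RTree.node l r)
  | pair_swap {s₁ s₂ l r : RTree L} :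
      Embeds s₁ r → Embeds s₂ l → Embeds (RTree.node s₁ s₂) (RTree.node l r)

/-- `mast T₁ T₂` is the maximum cardinality of a subset `X ⊆ L(T₁) ∩ L(T₂)` such that
the restrictions `T₁|X` and `T₂|X` are isomorphic; equivalently, the maximum number of
leaves of a rooted binary phylogenetic tree `S` with `S ⪯ T₁` and `S ⪯ T₂`. -/
noncomputable def mast (T₁ T₂ : RTree L) : ℕ :=
  sSup {n | ∃ S : RTree L, S.IsPhylo ∧ Embeds S T₁ ∧ Embeds S T₂ ∧ S.numLeaves = n}

end RTree

/-! ### Auxiliary lemmas -/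

namespace RTree

variable {L : Type}

@[simp] lemma leafList_leaf (b : L) : (leaf b).leafList = [b] := rfl

@[simp] lemma leafList_node (l r : RTree L) :
    (node l r).leafList = l.leafList ++ r.leafList := rfl

@[simp] lemma numLeaves_leaf (b : L) : (leaf b).numLeaves = 1 := rfl

@[simp] lemma numLeaves_node (l r : RTree L) :
    (node l r).numLeaves = l.numLeaves + r.numLeaves := List.length_append

lemma mem_leafSet {b : L} {T : RTree L} : b ∈ T.leafSet ↔ b ∈ T.leafList := Iff.rfl

lemma leafSet_finite (T : RTree L) : T.leafSet.Finite := T.leafList.finite_toSet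

@[simp] lemma leafSet_leaf (b : L) : (leaf b).leafSet = {b} := by
  ext x; simp [leafSet]

@[simp] lemma leafSet_node (l r : RTree L) :
    (node l r).leafSet = l.leafSet ∪ r.leafSet := by
  ext x; simp [leafSet]

lemma isPhylo_node_iff {A B : RTree L} :
    (node A B).IsPhylo ↔ A.IsPhylo ∧ B.IsPhylo ∧ A.leafList.Disjoint B.leafList := by
  simp [IsPhylo, List.nodup_append, List.disjoint_iff_ne]

lemma embeds_leaf_of_mem {b : L} : ∀ {T : RTree L}, b ∈ T.leafList → Embeds (leaf b) T
  | leaf a, h => by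
      simp only [leafList_leaf, List.mem_singleton] at h
      subst h; exact .leaf _
  | node l r, h => by
      rcases List.mem_append.mp h with h | h
      · exact .left (embeds_leaf_of_mem h)
      · exact .right (embeds_leaf_of_mem h)

lemma Embeds.mem_leafList {S T : RTree L} (h : Embeds S T) :
    ∀ b ∈ S.leafList, b ∈ T.leafList := by
  induction h with
  | leaf b => exact fun b hb => hb
  | left _ ih => exact fun b hb => List.mem_append_left _ (ih b hb)
  | right _ ih => exact fun b hb => List.mem_append_right _ (ih b hb)
  | pair _ _ ih1 ih2 =>
      intro b hb
      rcases List.mem_append.mp hb with h | h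
      · exact List.mem_append_left _ (ih1 b h)
      · exact List.mem_append_right _ (ih2 b h)
  | pair_swap _ _ ih1 ih2 =>
      intro b hb
      rcases List.mem_append.mp hb with h | h
      · exact List.mem_append_right _ (ih1 b h)
      · exact List.mem_append_left _ (ih2 b h)

lemma Embeds.numLeaves_le {S T : RTree L} (hS : S.IsPhylo) (h : Embeds S T) :
    S.numLeaves ≤ T.numLeaves :=
  (List.subperm_of_subset hS (fun _ hb => h.mem_leafList _ hb)).length_le

lemma bddAbove_mastSet (T₁ T₂ : RTree L) :
    BddAbove {n | ∃ S : RTree L, S.IsPhylo ∧ Embeds S T₁ ∧ Embeds S T₂ ∧ S.numLeaves = n} := by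
  refine ⟨T₁.numLeaves, fun n hn => ?_⟩
  obtain ⟨S, hS, h1, _, rfl⟩ := hn
  exact Embeds.numLeaves_le hS h1

lemma le_mast {T₁ T₂ S : RTree L} (hS : S.IsPhylo) (h1 : Embeds S T₁) (h2 : Embeds S T₂) :
    S.numLeaves ≤ mast T₁ T₂ :=
  le_csSup (bddAbove_mastSet T₁ T₂) ⟨S, hS, h1, h2, rfl⟩

lemma one_le_mast {T₁ T₂ : RTree L} (h : (T₁.leafSet ∩ T₂.leafSet).Nonempty) :
    1 ≤ mast T₁ T₂ := by
  obtain ⟨b, hb1, hb2⟩ := h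
  have := le_mast (T₁ := T₁) (T₂ := T₂) (S := leaf b) (by simp [IsPhylo])
    (embeds_leaf_of_mem hb1) (embeds_leaf_of_mem hb2)
  simpa using this

lemma exists_mast_witness {T₁ T₂ : RTree L} (h : (T₁.leafSet ∩ T₂.leafSet).Nonempty) :
    ∃ S : RTree L, S.IsPhylo ∧ Embeds S T₁ ∧ Embeds S T₂ ∧ S.numLeaves = mast T₁ T₂ := by
  obtain ⟨b, hb1, hb2⟩ := h
  have hne : {n | ∃ S : RTree L, S.IsPhylo ∧ Embeds S T₁ ∧ Embeds S T₂ ∧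
      S.numLeaves = n}.Nonempty :=
    ⟨1, leaf b, by simp [IsPhylo], embeds_leaf_of_mem hb1, embeds_leaf_of_mem hb2, rfl⟩
  exact Nat.sSup_mem hne (bddAbove_mastSet T₁ T₂)

lemma mast_mono {U W T₁ T₂ : RTree L} (h : (U.leafSet ∩ W.leafSet).Nonempty)
    (f₁ : ∀ S : RTree L, Embeds S U → Embeds S T₁)
    (f₂ : ∀ S : RTree L, Embeds S W → Embeds S T₂) :
    mast U W ≤ mast T₁ T₂ := by
  obtain ⟨S, hS, h1, h2, hn⟩ := exists_mast_witness h
  exact hn ▸ le_mast hS (f₁ S h1) (f₂ S h2)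

lemma mast_pair_le {A B C D : RTree L} (hp : A.leafList.Disjoint B.leafList)
    (hAC : (A.leafSet ∩ C.leafSet).Nonempty) (hBD : (B.leafSet ∩ D.leafSet).Nonempty) :
    mast A C + mast B D ≤ mast (node A B) (node C D) := by
  obtain ⟨S₁, hS₁, e₁A, e₁C, hn₁⟩ := exists_mast_witness hAC
  obtain ⟨S₂, hS₂, e₂B, e₂D, hn₂⟩ := exists_mast_witness hBD
  have hphy : (node S₁ S₂).IsPhylo := by
    rw [isPhylo_node_iff]
    exact ⟨hS₁, hS₂, fun x hx hx' => hp (e₁A.mem_leafList x hx) (e₂B.mem_leafList x hx')⟩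
  have := le_mast hphy (Embeds.pair e₁A e₂B) (Embeds.pair e₁C e₂D)
  simpa [hn₁, hn₂] using this

lemma mast_pair_swap_le {A B C D : RTree L} (hp : A.leafList.Disjoint B.leafList)
    (hAD : (A.leafSet ∩ D.leafSet).Nonempty) (hBC : (B.leafSet ∩ C.leafSet).Nonempty) :
    mast A D + mast B C ≤ mast (node A B) (node C D) := by
  obtain ⟨S₁, hS₁, e₁A, e₁D, hn₁⟩ := exists_mast_witness hAD
  obtain ⟨S₂, hS₂, e₂B, e₂C, hn₂⟩ := exists_mast_witness hBC
  have hphy : (node S₁ S₂).IsPhylo := by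
    rw [isPhylo_node_iff]
    exact ⟨hS₁, hS₂, fun x hx hx' => hp (e₁A.mem_leafList x hx) (e₂B.mem_leafList x hx')⟩
  have := le_mast hphy (Embeds.pair e₁A e₂B) (Embeds.pair_swap e₁D e₂C)
  simpa [hn₁, hn₂] using this

lemma disjoint_leafSet {A B : RTree L} (hp : A.leafList.Disjoint B.leafList) :
    Disjoint A.leafSet B.leafSet :=
  Set.disjoint_left.mpr fun _ ha hb => hp ha hb

lemma ncard_inter_node_right (X : Set L) (hX : X.Finite) {C D : RTree L}
    (hp : C.leafList.Disjoint D.leafList) :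
    (X ∩ (node C D).leafSet).ncard = (X ∩ C.leafSet).ncard + (X ∩ D.leafSet).ncard := by
  rw [leafSet_node, Set.inter_union_distrib_left]
  exact Set.ncard_union_eq
    ((disjoint_leafSet hp).mono Set.inter_subset_right Set.inter_subset_right)
    (hX.inter_of_left _) (hX.inter_of_left _)

lemma ncard_inter_node_left (Y : Set L) (hY : Y.Finite) {A B : RTree L}
    (hp : A.leafList.Disjoint B.leafList) :
    ((node A B).leafSet ∩ Y).ncard = (A.leafSet ∩ Y).ncard + (B.leafSet ∩ Y).ncard := by
  rw [leafSet_node, Set.union_inter_distrib_right]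
  exact Set.ncard_union_eq
    ((disjoint_leafSet hp).mono Set.inter_subset_left Set.inter_subset_left)
    (hY.inter_of_right _) (hY.inter_of_right _)

/-! ### Numeric helper lemmas -/

lemma numeric_one {a c t t' m M : ℝ} {h hUW : ℕ}
    (ha0 : 0 < a) (ha1 : a ≤ 1) (hc0 : 0 ≤ c)
    (ht0 : 0 ≤ t) (h1 : a * t ≤ t') (hIH : t' * a ^ hUW ≤ m ^ c)
    (hm0 : 0 ≤ m) (hm : m ≤ M) (hh : hUW + 1 ≤ h) :
    t * a ^ h ≤ M ^ c := by
  have hpow : a ^ h ≤ a ^ (hUW + 1) := pow_le_pow_of_le_one ha0.le ha1 hh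
  calc t * a ^ h ≤ t * a ^ (hUW + 1) := mul_le_mul_of_nonneg_left hpow ht0
    _ = (a * t) * a ^ hUW := by ring
    _ ≤ t' * a ^ hUW := mul_le_mul_of_nonneg_right h1 (pow_nonneg ha0.le _)
    _ ≤ m ^ c := hIH
    _ ≤ M ^ c := Real.rpow_le_rpow hm0 hm hc0

lemma numeric_two {δ a c t tj mj M : ℝ} {h hj : ℕ}
    (hδ0 : 0 < δ) (ha0 : 0 < a) (ha1 : a ≤ 1) (hc0 : 0 ≤ c)
    (h2c : (2 : ℝ) ^ c = a / δ)
    (ht0 : 0 ≤ t) (htj : δ * t ≤ tj)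
    (hIH : tj * a ^ hj ≤ mj ^ c) (hmj1 : 1 ≤ mj)
    (hM : 2 * mj ≤ M) (hhj : hj + 2 ≤ h) :
    t * a ^ h ≤ M ^ c := by
  have hmj0 : (0:ℝ) ≤ mj := by linarith
  have hpowle : a ^ h ≤ a ^ (hj + 2) := pow_le_pow_of_le_one ha0.le ha1 hhj
  have step1 : t * a ^ h ≤ t * a ^ (hj + 2) := mul_le_mul_of_nonneg_left hpowle ht0
  have e1 : t * a ^ (hj + 2) = (a ^ 2 / δ) * ((δ * t) * a ^ hj) := by
    field_simp; ring
  have step2 : (δ * t) * a ^ hj ≤ tj * a ^ hj :=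
    mul_le_mul_of_nonneg_right htj (pow_nonneg ha0.le _)
  have hb0 : (0:ℝ) ≤ a ^ 2 / δ := by positivity
  have step3 : t * a ^ (hj + 2) ≤ (a ^ 2 / δ) * (mj ^ c) := by
    rw [e1]
    exact mul_le_mul_of_nonneg_left (le_trans step2 hIH) hb0
  have step4 : (a ^ 2 / δ) * mj ^ c ≤ (a / δ) * mj ^ c := by
    have hle : a ^ 2 / δ ≤ a / δ := by
      rw [div_le_div_iff₀ hδ0 hδ0]
      nlinarith [mul_nonneg (mul_nonneg (sub_nonneg.mpr ha1) ha0.le) hδ0.le]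
    exact mul_le_mul_of_nonneg_right hle (Real.rpow_nonneg hmj0 _)
  have e2 : (a / δ) * mj ^ c = (2 * mj) ^ c := by
    rw [Real.mul_rpow (by norm_num) hmj0, h2c]
  have step5 : (2 * mj) ^ c ≤ M ^ c := Real.rpow_le_rpow (by linarith) hM hc0
  calc t * a ^ h ≤ t * a ^ (hj + 2) := step1
    _ ≤ (a ^ 2 / δ) * mj ^ c := step3
    _ ≤ (a / δ) * mj ^ c := step4
    _ = (2 * mj) ^ c := e2
    _ ≤ M ^ c := step5

/-! ### The key inductive bound -/

lemma key_base {T₁ T₂ : RTree L} {δ : ℝ} (hδ0 : 0 < δ) (hδ4 : δ < 1/4)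
    (hcard : (T₁.leafSet ∩ T₂.leafSet).ncard ≤ 1)
    (hpos : 0 < (T₁.leafSet ∩ T₂.leafSet).ncard) :
    ((T₁.leafSet ∩ T₂.leafSet).ncard : ℝ) * (1 - 3 * δ) ^ (T₁.height + T₂.height)
      ≤ (mast T₁ T₂ : ℝ) ^ (Real.logb 2 ((1 - 3 * δ) / δ)) := by
  have ht1 : (T₁.leafSet ∩ T₂.leafSet).ncard = 1 := le_antisymm hcard hpos
  have hne : (T₁.leafSet ∩ T₂.leafSet).Nonempty := Set.nonempty_of_ncard_ne_zero (by omega)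
  have hM : (1 : ℝ) ≤ (mast T₁ T₂ : ℝ) := by exact_mod_cast one_le_mast hne
  have ha0 : (0:ℝ) < 1 - 3 * δ := by linarith
  have hc0 : 0 ≤ Real.logb 2 ((1 - 3 * δ) / δ) :=
    Real.logb_nonneg one_lt_two (by rw [le_div_iff₀ hδ0]; linarith)
  calc ((T₁.leafSet ∩ T₂.leafSet).ncard : ℝ) * (1 - 3 * δ) ^ (T₁.height + T₂.height)
      ≤ 1 := by
        rw [ht1]
        simpa using pow_le_one₀ ha0.le (by linarith : (1:ℝ) - 3 * δ ≤ 1)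
    _ = (1:ℝ) ^ Real.logb 2 ((1 - 3 * δ) / δ) := (Real.one_rpow _).symm
    _ ≤ (mast T₁ T₂ : ℝ) ^ Real.logb 2 ((1 - 3 * δ) / δ) :=
        Real.rpow_le_rpow zero_le_one hM hc0

lemma key (δ : ℝ) (hδ0 : 0 < δ) (hδ4 : δ < 1/4) :
    ∀ (n : ℕ) (T₁ T₂ : RTree L), T₁.height + T₂.height ≤ n → T₁.IsPhylo → T₂.IsPhylo →
      0 < (T₁.leafSet ∩ T₂.leafSet).ncard →
      ((T₁.leafSet ∩ T₂.leafSet).ncard : ℝ) * (1 - 3 * δ) ^ (T₁.height + T₂.height)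
        ≤ (mast T₁ T₂ : ℝ) ^ (Real.logb 2 ((1 - 3 * δ) / δ)) := by
  intro n
  induction n with
  | zero =>
    intro T₁ T₂ hh hp1 hp2 hpos
    cases T₁ with
    | leaf b =>
      refine key_base hδ0 hδ4 ?_ hpos
      have hsub : (leaf b : RTree L).leafSet ∩ T₂.leafSet ⊆ {b} := by
        rw [leafSet_leaf]; exact Set.inter_subset_left
      calc ((leaf b : RTree L).leafSet ∩ T₂.leafSet).ncard
          ≤ ({b} : Set L).ncard := Set.ncard_le_ncard hsub (Set.finite_singleton b)
        _ = 1 := Set.ncard_singleton b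
    | node A B =>
      exfalso
      have : (node A B).height = max A.height B.height + 1 := rfl
      omega
  | succ n ih =>
    intro T₁ T₂ hh hp1 hp2 hpos
    cases T₁ with
    | leaf b =>
      refine key_base hδ0 hδ4 ?_ hpos
      have hsub : (leaf b : RTree L).leafSet ∩ T₂.leafSet ⊆ {b} := by
        rw [leafSet_leaf]; exact Set.inter_subset_left
      calc ((leaf b : RTree L).leafSet ∩ T₂.leafSet).ncard
          ≤ ({b} : Set L).ncard := Set.ncard_le_ncard hsub (Set.finite_singleton b)
        _ = 1 := Set.ncard_singleton b
    | node A B =>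
      cases T₂ with
      | leaf b =>
        refine key_base hδ0 hδ4 ?_ hpos
        have hsub : (node A B).leafSet ∩ (leaf b : RTree L).leafSet ⊆ {b} := by
          rw [leafSet_leaf]; exact Set.inter_subset_right
        calc ((node A B).leafSet ∩ (leaf b : RTree L).leafSet).ncard
            ≤ ({b} : Set L).ncard := Set.ncard_le_ncard hsub (Set.finite_singleton b)
          _ = 1 := Set.ncard_singleton b
      | node C D =>
        obtain ⟨hpA, hpB, hdAB⟩ := isPhylo_node_iff.mp hp1
        obtain ⟨hpC, hpD, hdCD⟩ := isPhylo_node_iff.mp hp2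
        have ha0 : (0:ℝ) < 1 - 3 * δ := by linarith
        have ha1 : (1:ℝ) - 3 * δ ≤ 1 := by linarith
        have hc0 : 0 ≤ Real.logb 2 ((1 - 3 * δ) / δ) :=
          Real.logb_nonneg one_lt_two (by rw [le_div_iff₀ hδ0]; linarith)
        have h2c : (2:ℝ) ^ Real.logb 2 ((1 - 3 * δ) / δ) = (1 - 3 * δ) / δ :=
          Real.rpow_logb two_pos (by norm_num) (by positivity)
        -- the four intersection counts
        set tAC := (A.leafSet ∩ C.leafSet).ncard with htAC
        set tAD := (A.leafSet ∩ D.leafSet).ncard with htAD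
        set tBC := (B.leafSet ∩ C.leafSet).ncard with htBC
        set tBD := (B.leafSet ∩ D.leafSet).ncard with htBD
        set t := ((node A B).leafSet ∩ (node C D).leafSet).ncard with ht_def
        have hsplit : t = (tAC + tAD) + (tBC + tBD) := by
          rw [ht_def, ncard_inter_node_left _ (leafSet_finite (node C D)) hdAB,
              ncard_inter_node_right _ (leafSet_finite A) hdCD,
              ncard_inter_node_right _ (leafSet_finite B) hdCD]
        have htR : (t:ℝ) = (tAC:ℝ) + tAD + ((tBC:ℝ) + tBD) := by exact_mod_cast hsplit
        have htpos : (1:ℝ) ≤ (t:ℝ) := by exact_mod_cast hpos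
        have hδt : (0:ℝ) < δ * t := mul_pos hδ0 (by linarith)
        -- heights
        set mAB := max A.height B.height with hmAB
        set mCD := max C.height D.height with hmCD
        have hhA : A.height ≤ mAB := le_max_left _ _
        have hhB : B.height ≤ mAB := le_max_right _ _
        have hhC : C.height ≤ mCD := le_max_left _ _
        have hhD : D.height ≤ mCD := le_max_right _ _
        have hXY : (node A B).height = mAB + 1 := rfl
        have hCD : (node C D).height = mCD + 1 := rfl
        rw [hXY, hCD] at hh
        by_cases hca : δ * (t:ℝ) ≤ (tAC:ℝ) ∧ δ * (t:ℝ) ≤ (tBD:ℝ)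
        · -- both diagonal parts are large : recurse on (A,C) and (B,D)
          have posAC : 0 < tAC := by
            have : (0:ℝ) < (tAC:ℝ) := lt_of_lt_of_le hδt hca.1
            exact_mod_cast this
          have posBD : 0 < tBD := by
            have : (0:ℝ) < (tBD:ℝ) := lt_of_lt_of_le hδt hca.2
            exact_mod_cast this
          have neAC : (A.leafSet ∩ C.leafSet).Nonempty :=
            Set.nonempty_of_ncard_ne_zero (by omega)
          have neBD : (B.leafSet ∩ D.leafSet).Nonempty :=
            Set.nonempty_of_ncard_ne_zero (by omega)
          have bAC := ih A C (by omega) hpA hpC posAC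
          have bBD := ih B D (by omega) hpB hpD posBD
          have hsum : mast A C + mast B D ≤ mast (node A B) (node C D) :=
            mast_pair_le hdAB neAC neBD
          have m1 : 1 ≤ mast A C := one_le_mast neAC
          have m2 : 1 ≤ mast B D := one_le_mast neBD
          rcases le_total (mast A C) (mast B D) with hmm | hmm
          · refine numeric_two hδ0 ha0 ha1 hc0 h2c (by positivity) hca.1 bAC
              (by exact_mod_cast m1) ?_ (by omega)
            have : 2 * mast A C ≤ mast (node A B) (node C D) := by omega
            exact_mod_cast this
          · refine numeric_two hδ0 ha0 ha1 hc0 h2c (by positivity) hca.2 bBD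
              (by exact_mod_cast m2) ?_ (by omega)
            have : 2 * mast B D ≤ mast (node A B) (node C D) := by omega
            exact_mod_cast this
        · by_cases hcb : δ * (t:ℝ) ≤ (tAD:ℝ) ∧ δ * (t:ℝ) ≤ (tBC:ℝ)
          · -- both anti-diagonal parts are large : recurse on (A,D) and (B,C)
            have posAD : 0 < tAD := by
              have : (0:ℝ) < (tAD:ℝ) := lt_of_lt_of_le hδt hcb.1
              exact_mod_cast this
            have posBC : 0 < tBC := by
              have : (0:ℝ) < (tBC:ℝ) := lt_of_lt_of_le hδt hcb.2
              exact_mod_cast this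
            have neAD : (A.leafSet ∩ D.leafSet).Nonempty :=
              Set.nonempty_of_ncard_ne_zero (by omega)
            have neBC : (B.leafSet ∩ C.leafSet).Nonempty :=
              Set.nonempty_of_ncard_ne_zero (by omega)
            have bAD := ih A D (by omega) hpA hpD posAD
            have bBC := ih B C (by omega) hpB hpC posBC
            have hsum : mast A D + mast B C ≤ mast (node A B) (node C D) :=
              mast_pair_swap_le hdAB neAD neBC
            have m1 : 1 ≤ mast A D := one_le_mast neAD
            have m2 : 1 ≤ mast B C := one_le_mast neBC
            rcases le_total (mast A D) (mast B C) with hmm | hmm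
            · refine numeric_two hδ0 ha0 ha1 hc0 h2c (by positivity) hcb.1 bAD
                (by exact_mod_cast m1) ?_ (by omega)
              have : 2 * mast A D ≤ mast (node A B) (node C D) := by omega
              exact_mod_cast this
            · refine numeric_two hδ0 ha0 ha1 hc0 h2c (by positivity) hcb.2 bBC
                (by exact_mod_cast m2) ?_ (by omega)
              have : 2 * mast B C ≤ mast (node A B) (node C D) := by omega
              exact_mod_cast this
          · -- one part of each pairing is small : a single child carries most leaves
            rw [not_and_or] at hca hcb
            push_neg at hca hcb
            have hexp : ((1:ℝ) - 3 * δ) * (t:ℝ) = (t:ℝ) - 3 * (δ * (t:ℝ)) := by ring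
            rcases hca with hs1 | hs1 <;> rcases hcb with hs2 | hs2
            · -- tAC, tAD small : recurse on (B, node C D)
              have ht' : (B.leafSet ∩ (node C D).leafSet).ncard = tBC + tBD :=
                ncard_inter_node_right _ (leafSet_finite B) hdCD
              have hbig : (1 - 3 * δ) * (t:ℝ)
                  ≤ ((B.leafSet ∩ (node C D).leafSet).ncard : ℝ) := by
                rw [ht']; push_cast; linarith
              have pos' : 0 < (B.leafSet ∩ (node C D).leafSet).ncard := by
                have h0 : (0:ℝ) < ((B.leafSet ∩ (node C D).leafSet).ncard : ℝ) :=
                  lt_of_lt_of_le (mul_pos ha0 (by linarith)) hbig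
                exact_mod_cast h0
              have bIH := ih B (node C D) (by rw [hCD]; omega) hpB hp2 pos'
              have hm : mast B (node C D) ≤ mast (node A B) (node C D) :=
                mast_mono (Set.nonempty_of_ncard_ne_zero (by omega))
                  (fun S h => Embeds.right h) (fun S h => h)
              exact numeric_one ha0 ha1 hc0 (by positivity) hbig bIH
                (by positivity) (by exact_mod_cast hm) (by rw [hXY, hCD]; omega)
            · -- tAC, tBC small : recurse on (node A B, D)
              have ht' : ((node A B).leafSet ∩ D.leafSet).ncard = tAD + tBD :=
                ncard_inter_node_left _ (leafSet_finite D) hdAB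
              have hbig : (1 - 3 * δ) * (t:ℝ)
                  ≤ (((node A B).leafSet ∩ D.leafSet).ncard : ℝ) := by
                rw [ht']; push_cast; linarith
              have pos' : 0 < ((node A B).leafSet ∩ D.leafSet).ncard := by
                have h0 : (0:ℝ) < (((node A B).leafSet ∩ D.leafSet).ncard : ℝ) :=
                  lt_of_lt_of_le (mul_pos ha0 (by linarith)) hbig
                exact_mod_cast h0
              have bIH := ih (node A B) D (by rw [hXY]; omega) hp1 hpD pos'
              have hm : mast (node A B) D ≤ mast (node A B) (node C D) :=
                mast_mono (Set.nonempty_of_ncard_ne_zero (by omega))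
                  (fun S h => h) (fun S h => Embeds.right h)
              exact numeric_one ha0 ha1 hc0 (by positivity) hbig bIH
                (by positivity) (by exact_mod_cast hm) (by rw [hXY, hCD]; omega)
            · -- tBD, tAD small : recurse on (node A B, C)
              have ht' : ((node A B).leafSet ∩ C.leafSet).ncard = tAC + tBC :=
                ncard_inter_node_left _ (leafSet_finite C) hdAB
              have hbig : (1 - 3 * δ) * (t:ℝ)
                  ≤ (((node A B).leafSet ∩ C.leafSet).ncard : ℝ) := by
                rw [ht']; push_cast; linarith
              have pos' : 0 < ((node A B).leafSet ∩ C.leafSet).ncard := by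
                have h0 : (0:ℝ) < (((node A B).leafSet ∩ C.leafSet).ncard : ℝ) :=
                  lt_of_lt_of_le (mul_pos ha0 (by linarith)) hbig
                exact_mod_cast h0
              have bIH := ih (node A B) C (by rw [hXY]; omega) hp1 hpC pos'
              have hm : mast (node A B) C ≤ mast (node A B) (node C D) :=
                mast_mono (Set.nonempty_of_ncard_ne_zero (by omega))
                  (fun S h => h) (fun S h => Embeds.left h)
              exact numeric_one ha0 ha1 hc0 (by positivity) hbig bIH
                (by positivity) (by exact_mod_cast hm) (by rw [hXY, hCD]; omega)
            · -- tBD, tBC small : recurse on (A, node C D)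
              have ht' : (A.leafSet ∩ (node C D).leafSet).ncard = tAC + tAD :=
                ncard_inter_node_right _ (leafSet_finite A) hdCD
              have hbig : (1 - 3 * δ) * (t:ℝ)
                  ≤ ((A.leafSet ∩ (node C D).leafSet).ncard : ℝ) := by
                rw [ht']; push_cast; linarith
              have pos' : 0 < (A.leafSet ∩ (node C D).leafSet).ncard := by
                have h0 : (0:ℝ) < ((A.leafSet ∩ (node C D).leafSet).ncard : ℝ) :=
                  lt_of_lt_of_le (mul_pos ha0 (by linarith)) hbig
                exact_mod_cast h0
              have bIH := ih A (node C D) (by rw [hCD]; omega) hpA hp2 pos'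
              have hm : mast A (node C D) ≤ mast (node A B) (node C D) :=
                mast_mono (Set.nonempty_of_ncard_ne_zero (by omega))
                  (fun S h => Embeds.left h) (fun S h => h)
              exact numeric_one ha0 ha1 hc0 (by positivity) hbig bIH
                (by positivity) (by exact_mod_cast hm) (by rw [hXY, hCD]; omega)

end RTree

/-- If `T₁`, `T₂` are rooted balanced binary phylogenetic trees of
heights `m₁`, `m₂` with `|L(T₁) ∩ L(T₂)| = t > 0`, then for every `δ ∈ (0,1/4)`,
`mast{T₁,T₂} ≥ 2^{g(m₁,m₂,t)}` where
`g(m₁,m₂,t) = ((m₁+m₂)·log(1-3δ) + log t)/(log(1-3δ) - log δ)` (logarithms base 2). -/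
theorem stmt_12 {L : Type} (m₁ m₂ t : ℕ) (T₁ T₂ : RTree L) (δ : ℝ)
    (h₁ : T₁.IsPhylo) (h₂ : T₂.IsPhylo)
    (hbal₁ : T₁.IsBalanced) (hbal₂ : T₂.IsBalanced)
    (hm₁ : T₁.height = m₁) (hm₂ : T₂.height = m₂)
    (ht : (T₁.leafSet ∩ T₂.leafSet).ncard = t) (ht0 : 0 < t)
    (hδ : δ ∈ Set.Ioo (0 : ℝ) (1/4)) :
    (2 : ℝ) ^ ((((m₁ : ℝ) + m₂) * Real.logb 2 (1 - 3 * δ) + Real.logb 2 (t : ℝ)) /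
        (Real.logb 2 (1 - 3 * δ) - Real.logb 2 δ))
      ≤ (RTree.mast T₁ T₂ : ℝ) := by
  obtain ⟨hδ0, hδ4⟩ := hδ
  subst hm₁
  subst hm₂
  subst ht
  have ha0 : (0:ℝ) < 1 - 3 * δ := by linarith
  have hq1 : (1:ℝ) < (1 - 3 * δ) / δ := by rw [lt_div_iff₀ hδ0]; linarith
  have hc0 : 0 < Real.logb 2 ((1 - 3 * δ) / δ) := Real.logb_pos one_lt_two hq1
  have hkey := RTree.key δ hδ0 hδ4 (T₁.height + T₂.height) T₁ T₂ le_rfl h₁ h₂ ht0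
  have htpos : (0:ℝ) < ((T₁.leafSet ∩ T₂.leafSet).ncard : ℝ) := by exact_mod_cast ht0
  have hX : (0:ℝ) < ((T₁.leafSet ∩ T₂.leafSet).ncard : ℝ)
      * (1 - 3 * δ) ^ (T₁.height + T₂.height) := by positivity
  have hden : Real.logb 2 (1 - 3 * δ) - Real.logb 2 δ
      = Real.logb 2 ((1 - 3 * δ) / δ) := by
    rw [Real.logb_div (ne_of_gt ha0) (ne_of_gt hδ0)]
  have hnum : ((T₁.height : ℝ) + T₂.height) * Real.logb 2 (1 - 3 * δ)
        + Real.logb 2 ((T₁.leafSet ∩ T₂.leafSet).ncard : ℝ)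
      = Real.logb 2 (((T₁.leafSet ∩ T₂.leafSet).ncard : ℝ)
          * (1 - 3 * δ) ^ (T₁.height + T₂.height)) := by
    rw [Real.logb_mul (ne_of_gt htpos) (ne_of_gt (by positivity)), Real.logb_pow]
    push_cast
    ring
  rw [hnum, hden]
  set c := Real.logb 2 ((1 - 3 * δ) / δ)
  set X := ((T₁.leafSet ∩ T₂.leafSet).ncard : ℝ)
      * (1 - 3 * δ) ^ (T₁.height + T₂.height) with hX_def
  have e1 : (2:ℝ) ^ (Real.logb 2 X / c) = X ^ (1 / c) := by
    rw [div_eq_mul_one_div, Real.rpow_mul (by norm_num),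
      Real.rpow_logb two_pos (by norm_num) hX]
  rw [e1]
  have h2 : X ^ (1 / c) ≤ ((RTree.mast T₁ T₂ : ℝ) ^ c) ^ (1 / c) :=
    Real.rpow_le_rpow hX.le hkey (by positivity)
  have h3 : ((RTree.mast T₁ T₂ : ℝ) ^ c) ^ (1 / c) = (RTree.mast T₁ T₂ : ℝ) := by
    rw [← Real.rpow_mul (by positivity), mul_one_div, div_self (ne_of_gt hc0),
      Real.rpow_one]
  rw [h3] at h2
  exact h2
end

section
/- Let δ ∈ (0, 1/3 − 1/(3√2)), set β := (1 + 2·log(1−3δ))/(log(1−3δ) − log δ) and c := (log 3 − 1)/(log(1−3δ) − log δ). If T1 and T2 are balanced (unrooted) phylogenetic trees on the same leaf-set, both in class B_m or both in class C_m, then mast{T1, T2} ≥ 2^{β·m − c}. -/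
/-!
# Unrooted binary phylogenetic trees, via rooted representatives

An unrooted binary phylogenetic tree (all internal vertices of degree 3) with at least
two leaves is represented by any rooted binary tree obtained from it by subdividing an
edge and rooting there; conversely, suppressing the (degree-2) root of a rooted binary
tree yields an unrooted one.  Two rooted trees represent the same unrooted tree (i.e.
the unrooted trees are isomorphic by a graph isomorphism fixing every leaf label) iff
they are related by the equivalence relation `URel` generated by moving the root across
an edge together with (unordered) rooted isomorphism.
-/

namespace RTree

variable {L : Type}

/-- Rooted isomorphism of rooted binary trees, fixing all leaf labels (the two children
of a vertex are unordered). -/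
inductive RIso : RTree L → RTree L → Prop
  | leaf (b : L) : RIso (RTree.leaf b) (RTree.leaf b)
  | pair {a b c d : RTree L} :
      RIso a c → RIso b d → RIso (RTree.node a b) (RTree.node c d)
  | pair_swap {a b c d : RTree L} :
      RIso a d → RIso b c → RIso (RTree.node a b) (RTree.node c d)

/-- Moving the root of a rooted binary tree across one edge of the underlying unrooted
tree: this does not change the unrooted tree obtained by suppressing the root. -/
inductive RootMove : RTree L → RTree L → Prop
  | assoc (a b c : RTree L) :
      RootMove (RTree.node a (RTree.node b c)) (RTree.node (RTree.node a b) c)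

/-- `URel S T` holds iff the unrooted binary trees obtained from `S` and `T` by
suppressing their roots are isomorphic by a graph isomorphism fixing every leaf label. -/
def URel (S T : RTree L) : Prop :=
  Relation.EqvGen (fun X Y => RootMove X Y ∨ RIso X Y) S T

/-- `umast T₁ T₂` is the maximum agreement subtree size of the *unrooted* binary
phylogenetic trees represented by `T₁` and `T₂`: the maximum cardinality of a set
`X ⊆ L(T₁) ∩ L(T₂)` such that the unrooted restrictions `T₁|X` and `T₂|X` are
isomorphic (fixing leaf labels).  Equivalently, the maximum number of leaves of a
common unrooted subtree, given here by a pair of rooted representatives. -/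
noncomputable def umast (T₁ T₂ : RTree L) : ℕ :=
  sSup {n | ∃ S₁ S₂ : RTree L, S₁.IsPhylo ∧ S₂.IsPhylo ∧
    Embeds S₁ T₁ ∧ Embeds S₂ T₂ ∧ URel S₁ S₂ ∧ S₁.numLeaves = n}

end RTree

namespace RTree

variable {L : Type}

/-- An unrooted binary phylogenetic tree is in class `𝓑ₘ` if its center is a pair of
adjacent vertices and all leaves are at distance `m` from the center (it then has `2^m`
leaves).  Equivalently: rerooting it at its central edge yields a rooted tree whose two
subtrees are balanced of height `m - 1`. -/
def ClassB (m : ℕ) (T : RTree L) : Prop :=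
  ∃ l r : RTree L, URel (RTree.node l r) T ∧
    l.IsBalanced ∧ r.IsBalanced ∧ l.height + 1 = m ∧ r.height + 1 = m

/-- An unrooted binary phylogenetic tree is in class `𝓒ₘ` if its center is a single
vertex and all leaves are at distance `m` from the center (it then has `3·2^(m-1)`
leaves).  Equivalently: rerooting it at an edge incident to the center yields
`node a (node b c)` where the three branches `a`, `b`, `c` at the center are balanced
of height `m - 1`. -/
def ClassC (m : ℕ) (T : RTree L) : Prop :=
  ∃ a b c : RTree L, URel (RTree.node a (RTree.node b c)) T ∧
    a.IsBalanced ∧ b.IsBalanced ∧ c.IsBalanced ∧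
    a.height + 1 = m ∧ b.height + 1 = m ∧ c.height + 1 = m

/-- An unrooted phylogenetic tree is balanced if all leaves are at the same distance
from its center: it is a single vertex, or lies in some class `𝓑ₘ` or `𝓒ₘ`. -/
def UBalanced (T : RTree L) : Prop :=
  (∃ b : L, T = RTree.leaf b) ∨ ∃ m : ℕ, ClassB m T ∨ ClassC m T

end RTree

/-! ### Auxiliary lemmas for the proof of Statement 14 -/

namespace RTree

variable {L : Type}

lemma aux_leafList_ne_nil (T : RTree L) : T.leafList ≠ [] := by
  induction T with
  | leaf b => simp [leafList]
  | node l r ihl ihr => simp [leafList, ihl]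

lemma aux_one_le_numLeaves (T : RTree L) : 1 ≤ T.numLeaves := by
  have := aux_leafList_ne_nil T
  have h2 : T.leafList.length ≠ 0 := by simpa using this
  simp only [numLeaves]
  omega

lemma aux_embeds_mem {S T : RTree L} (h : Embeds S T) :
    ∀ x ∈ S.leafList, x ∈ T.leafList := by
  induction h with
  | leaf b => intro x hx; exact hx
  | left h ih => intro x hx; simp [leafList]; exact Or.inl (ih x hx)
  | right h ih => intro x hx; simp [leafList]; exact Or.inr (ih x hx)
  | pair h1 h2 ih1 ih2 =>
      intro x hx
      simp only [leafList, List.mem_append] at hx ⊢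
      rcases hx with hx | hx
      · exact Or.inl (ih1 x hx)
      · exact Or.inr (ih2 x hx)
  | pair_swap h1 h2 ih1 ih2 =>
      intro x hx
      simp only [leafList, List.mem_append] at hx ⊢
      rcases hx with hx | hx
      · exact Or.inr (ih1 x hx)
      · exact Or.inl (ih2 x hx)

lemma aux_embeds_numLeaves_le {S T : RTree L} (h : Embeds S T) :
    S.numLeaves ≤ T.numLeaves := by
  induction h with
  | leaf b => exact le_refl _
  | left h ih => simp [numLeaves, leafList] at *; omega
  | right h ih => simp [numLeaves, leafList] at *; omega
  | pair h1 h2 ih1 ih2 => simp [numLeaves, leafList] at *; omega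
  | pair_swap h1 h2 ih1 ih2 => simp [numLeaves, leafList] at *; omega

lemma aux_embeds_leaf_of_mem {x : L} {T : RTree L} (h : x ∈ T.leafList) :
    Embeds (leaf x) T := by
  induction T with
  | leaf b => simp [leafList] at h; subst h; exact Embeds.leaf x
  | node l r ihl ihr =>
      simp only [leafList, List.mem_append] at h
      rcases h with h | h
      · exact Embeds.left (ihl h)
      · exact Embeds.right (ihr h)

lemma aux_phylo_node {l r : RTree L} (h : (node l r).IsPhylo) :
    l.IsPhylo ∧ r.IsPhylo ∧ l.leafList.Disjoint r.leafList := by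
  have h' : (l.leafList ++ r.leafList).Nodup := h
  rw [List.nodup_append] at h'
  exact ⟨h'.1, h'.2.1, fun a ha hb => h'.2.2 a ha a hb rfl⟩

lemma aux_balanced_numLeaves {T : RTree L} (h : T.IsBalanced) :
    T.numLeaves = 2 ^ T.height := by
  induction T with
  | leaf b => simp [numLeaves, leafList, height]
  | node l r ihl ihr =>
      obtain ⟨hl, hr, hlr⟩ := h
      simp only [numLeaves, leafList, List.length_append, height] at *
      rw [ihl hl, ihr hr, hlr]
      rw [max_self]
      ring

lemma aux_riso_refl (T : RTree L) : RIso T T := by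
  induction T with
  | leaf b => exact RIso.leaf b
  | node l r ihl ihr => exact RIso.pair ihl ihr

lemma aux_riso_symm {S T : RTree L} (h : RIso S T) : RIso T S := by
  induction h with
  | leaf b => exact RIso.leaf b
  | pair h1 h2 ih1 ih2 => exact RIso.pair ih1 ih2
  | pair_swap h1 h2 ih1 ih2 => exact RIso.pair_swap ih2 ih1

lemma aux_riso_perm {S T : RTree L} (h : RIso S T) : S.leafList.Perm T.leafList := by
  induction h with
  | leaf b => exact List.Perm.refl _
  | pair h1 h2 ih1 ih2 => exact List.Perm.append ih1 ih2
  | pair_swap h1 h2 ih1 ih2 =>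
      simp only [leafList]
      exact (ih1.append ih2).trans List.perm_append_comm

lemma aux_rootmove_leafList {S T : RTree L} (h : RootMove S T) :
    S.leafList = T.leafList := by
  rcases h with ⟨a, b, c⟩
  simp [leafList, List.append_assoc]

lemma aux_urel_perm {S T : RTree L} (h : URel S T) : S.leafList.Perm T.leafList := by
  induction h with
  | rel x y hxy =>
      rcases hxy with h | h
      · rw [aux_rootmove_leafList h]
      · exact aux_riso_perm h
  | refl x => exact List.Perm.refl _
  | symm x y _ ih => exact ih.symm
  | trans x y z _ _ ih1 ih2 => exact ih1.trans ih2

lemma aux_urel_numLeaves {S T : RTree L} (h : URel S T) : S.numLeaves = T.numLeaves :=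
  (aux_urel_perm h).length_eq

lemma aux_urel_phylo {S T : RTree L} (h : URel S T) (hT : T.IsPhylo) : S.IsPhylo :=
  (aux_urel_perm h).nodup_iff.mpr hT

lemma aux_urel_mem {S T : RTree L} (h : URel S T) {x : L} :
    x ∈ S.leafList ↔ x ∈ T.leafList :=
  (aux_urel_perm h).mem_iff

lemma aux_embeds_of_riso {T T' : RTree L} (h : RIso T T') :
    ∀ S : RTree L, Embeds S T → Embeds S T' := by
  induction h with
  | leaf b => exact fun S hS => hS
  | @pair a b c d h1 h2 ih1 ih2 =>
      intro S hS
      cases hS with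
      | left h => exact Embeds.left (ih1 _ h)
      | right h => exact Embeds.right (ih2 _ h)
      | pair g1 g2 => exact Embeds.pair (ih1 _ g1) (ih2 _ g2)
      | pair_swap g1 g2 => exact Embeds.pair_swap (ih2 _ g1) (ih1 _ g2)
  | @pair_swap a b c d h1 h2 ih1 ih2 =>
      intro S hS
      cases hS with
      | left h => exact Embeds.right (ih1 _ h)
      | right h => exact Embeds.left (ih2 _ h)
      | pair g1 g2 => exact Embeds.pair_swap (ih1 _ g1) (ih2 _ g2)
      | pair_swap g1 g2 => exact Embeds.pair (ih2 _ g1) (ih1 _ g2)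

lemma aux_urel_of_riso {T T' : RTree L} (h : RIso T T') : URel T T' :=
  Relation.EqvGen.rel _ _ (Or.inr h)

lemma aux_urel_of_rootmove {T T' : RTree L} (h : RootMove T T') : URel T T' :=
  Relation.EqvGen.rel _ _ (Or.inl h)

lemma aux_urel_refl (T : RTree L) : URel T T := Relation.EqvGen.refl T

lemma aux_urel_symm {S T : RTree L} (h : URel S T) : URel T S := Relation.EqvGen.symm _ _ h

lemma aux_urel_trans {S T U : RTree L} (h1 : URel S T) (h2 : URel T U) : URel S U :=
  Relation.EqvGen.trans _ _ _ h1 h2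

/-- Transport of embeddings forward across a root move. -/
lemma aux_embeds_rootmove_fwd {a b c S : RTree L}
    (hS : Embeds S (node a (node b c))) :
    ∃ S' : RTree L, URel S S' ∧ Embeds S' (node (node a b) c) := by
  cases hS with
  | left h => exact ⟨S, aux_urel_refl S, Embeds.left (Embeds.left h)⟩
  | right h =>
      cases h with
      | left h => exact ⟨S, aux_urel_refl S, Embeds.left (Embeds.right h)⟩
      | right h => exact ⟨S, aux_urel_refl S, Embeds.right h⟩
      | pair g1 g2 => exact ⟨_, aux_urel_refl _, Embeds.pair (Embeds.right g1) g2⟩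
      | pair_swap g1 g2 => exact ⟨_, aux_urel_refl _, Embeds.pair_swap g1 (Embeds.right g2)⟩
  | @pair s1 s2 _ _ h1 h2 =>
      cases h2 with
      | left h => exact ⟨_, aux_urel_refl _, Embeds.left (Embeds.pair h1 h)⟩
      | right h => exact ⟨_, aux_urel_refl _, Embeds.pair (Embeds.left h1) h⟩
      | @pair t1 t2 _ _ g1 g2 =>
          refine ⟨node (node s1 t1) t2, ?_, Embeds.pair (Embeds.pair h1 g1) g2⟩
          exact aux_urel_of_rootmove (RootMove.assoc s1 t1 t2)
      | @pair_swap t1 t2 _ _ g1 g2 =>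
          refine ⟨node (node s1 t2) t1, ?_, Embeds.pair (Embeds.pair h1 g2) g1⟩
          refine aux_urel_trans (aux_urel_of_riso ?_)
            (aux_urel_of_rootmove (RootMove.assoc s1 t2 t1))
          exact RIso.pair (aux_riso_refl s1) (RIso.pair_swap (aux_riso_refl t1) (aux_riso_refl t2))
  | @pair_swap s1 s2 _ _ h1 h2 =>
      cases h1 with
      | left h => exact ⟨_, aux_urel_refl _, Embeds.left (Embeds.pair_swap h h2)⟩
      | right h => exact ⟨_, aux_urel_refl _, Embeds.pair_swap h (Embeds.left h2)⟩
      | @pair t1 t2 _ _ g1 g2 =>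
          refine ⟨node (node s2 t1) t2, ?_, Embeds.pair (Embeds.pair h2 g1) g2⟩
          refine aux_urel_trans (aux_urel_of_riso ?_)
            (aux_urel_of_rootmove (RootMove.assoc s2 t1 t2))
          exact RIso.pair_swap (aux_riso_refl (node t1 t2)) (aux_riso_refl s2)
      | @pair_swap t1 t2 _ _ g1 g2 =>
          refine ⟨node (node s2 t2) t1, ?_, Embeds.pair (Embeds.pair h2 g2) g1⟩
          refine aux_urel_trans (aux_urel_of_riso ?_)
            (aux_urel_of_rootmove (RootMove.assoc s2 t2 t1))
          exact RIso.pair_swap (RIso.pair_swap (aux_riso_refl t1) (aux_riso_refl t2))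
            (aux_riso_refl s2)

/-- Transport of embeddings backward across a root move. -/
lemma aux_embeds_rootmove_bwd {a b c S : RTree L}
    (hS : Embeds S (node (node a b) c)) :
    ∃ S' : RTree L, URel S S' ∧ Embeds S' (node a (node b c)) := by
  cases hS with
  | left h =>
      cases h with
      | left h => exact ⟨S, aux_urel_refl S, Embeds.left h⟩
      | right h => exact ⟨S, aux_urel_refl S, Embeds.right (Embeds.left h)⟩
      | pair g1 g2 => exact ⟨_, aux_urel_refl _, Embeds.pair g1 (Embeds.left g2)⟩
      | pair_swap g1 g2 => exact ⟨_, aux_urel_refl _, Embeds.pair_swap (Embeds.left g1) g2⟩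
  | right h => exact ⟨S, aux_urel_refl S, Embeds.right (Embeds.right h)⟩
  | @pair s1 s2 _ _ h1 h2 =>
      cases h1 with
      | left g => exact ⟨_, aux_urel_refl _, Embeds.pair g (Embeds.right h2)⟩
      | right g => exact ⟨_, aux_urel_refl _, Embeds.right (Embeds.pair g h2)⟩
      | @pair t1 t2 _ _ g1 g2 =>
          refine ⟨node t1 (node t2 s2), ?_, Embeds.pair g1 (Embeds.pair g2 h2)⟩
          exact aux_urel_symm (aux_urel_of_rootmove (RootMove.assoc t1 t2 s2))
      | @pair_swap t1 t2 _ _ g1 g2 =>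
          refine ⟨node t2 (node t1 s2), ?_, Embeds.pair g2 (Embeds.pair g1 h2)⟩
          refine aux_urel_trans (aux_urel_of_riso
            (RIso.pair (RIso.pair_swap (aux_riso_refl t1) (aux_riso_refl t2)) (aux_riso_refl s2)))
            ?_
          exact aux_urel_symm (aux_urel_of_rootmove (RootMove.assoc t2 t1 s2))
  | @pair_swap s1 s2 _ _ h1 h2 =>
      cases h2 with
      | left g => exact ⟨_, aux_urel_refl _, Embeds.pair_swap (Embeds.right h1) g⟩
      | right g => exact ⟨_, aux_urel_refl _, Embeds.right (Embeds.pair_swap h1 g)⟩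
      | @pair t1 t2 _ _ g1 g2 =>
          refine ⟨node t1 (node t2 s1), ?_, Embeds.pair g1 (Embeds.pair g2 h1)⟩
          refine aux_urel_trans (aux_urel_of_riso
            (RIso.pair_swap (aux_riso_refl s1) (aux_riso_refl (node t1 t2)))) ?_
          exact aux_urel_symm (aux_urel_of_rootmove (RootMove.assoc t1 t2 s1))
      | @pair_swap t1 t2 _ _ g1 g2 =>
          refine ⟨node t2 (node t1 s1), ?_, Embeds.pair g2 (Embeds.pair g1 h1)⟩
          refine aux_urel_trans (aux_urel_of_riso
            (RIso.pair_swap (aux_riso_refl s1)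
              (RIso.pair_swap (aux_riso_refl t1) (aux_riso_refl t2)))) ?_
          exact aux_urel_symm (aux_urel_of_rootmove (RootMove.assoc t2 t1 s1))

/-- Transport of embeddings across `URel`. -/
lemma aux_embeds_urel {T T' : RTree L} (h : URel T T') :
    ∀ S : RTree L, Embeds S T → ∃ S' : RTree L, URel S S' ∧ Embeds S' T' := by
  have main : ∀ X Y : RTree L, URel X Y →
      (∀ S : RTree L, Embeds S X → ∃ S', URel S S' ∧ Embeds S' Y) ∧
      (∀ S : RTree L, Embeds S Y → ∃ S', URel S S' ∧ Embeds S' X) := by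
    intro X Y hXY
    induction hXY with
    | rel x y hxy =>
        rcases hxy with hmv | hiso
        · cases hmv with
          | assoc a b c =>
              exact ⟨fun S hS => aux_embeds_rootmove_fwd hS,
                fun S hS => aux_embeds_rootmove_bwd hS⟩
        · exact ⟨fun S hS => ⟨S, aux_urel_refl S, aux_embeds_of_riso hiso S hS⟩,
            fun S hS => ⟨S, aux_urel_refl S, aux_embeds_of_riso (aux_riso_symm hiso) S hS⟩⟩
    | refl x => exact ⟨fun S hS => ⟨S, aux_urel_refl S, hS⟩, fun S hS => ⟨S, aux_urel_refl S, hS⟩⟩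
    | symm x y _ ih => exact ⟨ih.2, ih.1⟩
    | trans x y z _ _ ih1 ih2 =>
        constructor
        · intro S hS
          obtain ⟨S', hu, he⟩ := ih1.1 S hS
          obtain ⟨S'', hu2, he2⟩ := ih2.1 S' he
          exact ⟨S'', aux_urel_trans hu hu2, he2⟩
        · intro S hS
          obtain ⟨S', hu, he⟩ := ih2.2 S hS
          obtain ⟨S'', hu2, he2⟩ := ih1.2 S' he
          exact ⟨S'', aux_urel_trans hu hu2, he2⟩
  exact (main T T' h).1

/-- Rotation of the three branches around the root edge. -/
lemma aux_urel_rot (a b c : RTree L) :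
    URel (node a (node b c)) (node b (node c a)) := by
  refine aux_urel_trans (aux_urel_of_rootmove (RootMove.assoc a b c)) ?_
  refine aux_urel_trans (aux_urel_of_riso
    (RIso.pair_swap (aux_riso_refl (node a b)) (aux_riso_refl c))) ?_
  refine aux_urel_trans (aux_urel_of_rootmove (RootMove.assoc c a b)) ?_
  exact aux_urel_of_riso (RIso.pair_swap (aux_riso_refl (node c a)) (aux_riso_refl b))

end RTree

section RealFacts

open Real

/-- The exponent `p = 1/(log₂(1-3δ) - log₂ δ)`. -/
noncomputable def auxP (δ : ℝ) : ℝ := 1 / (Real.logb 2 (1 - 3*δ) - Real.logb 2 δ)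

/-- The bound function `F h k = ((2/3)·k·(1-3δ)^h)^p`. -/
noncomputable def auxF (δ : ℝ) (h : ℕ) (k : ℝ) : ℝ :=
  ((2/3) * k * (1 - 3*δ)^h) ^ auxP δ

variable {δ : ℝ}

lemma aux_tau_pos (h0 : 0 < δ) (h7 : δ < 1/7) : 0 < 1 - 3*δ := by nlinarith

lemma aux_tau_lt_one (h0 : 0 < δ) : 1 - 3*δ < 1 := by nlinarith

lemma aux_two_le_P (h0 : 0 < δ) (h7 : δ < 1/7) :
    2 ≤ Real.logb 2 (1 - 3*δ) - Real.logb 2 δ := by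
  have hτ : 0 < 1 - 3*δ := aux_tau_pos h0 h7
  rw [← Real.logb_div (ne_of_gt hτ) (ne_of_gt h0)]
  have h4 : (4:ℝ) ≤ (1 - 3*δ)/δ := by
    rw [le_div_iff₀ h0]; nlinarith
  calc (2:ℝ) = Real.logb 2 4 := by
        rw [show (4:ℝ) = (2:ℝ)^(2:ℝ) by norm_num,
          Real.logb_rpow (by norm_num) (by norm_num)]
    _ ≤ Real.logb 2 ((1-3*δ)/δ) :=
        Real.logb_le_logb_of_le (by norm_num) (by norm_num) h4

lemma aux_P_pos (h0 : 0 < δ) (h7 : δ < 1/7) :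
    0 < Real.logb 2 (1 - 3*δ) - Real.logb 2 δ := lt_of_lt_of_le (by norm_num) (aux_two_le_P h0 h7)

lemma aux_p_pos (h0 : 0 < δ) (h7 : δ < 1/7) : 0 < auxP δ :=
  one_div_pos.mpr (aux_P_pos h0 h7)

lemma aux_p_le_half (h0 : 0 < δ) (h7 : δ < 1/7) : auxP δ ≤ 1/2 := by
  have h2 := aux_two_le_P h0 h7
  have hP := aux_P_pos h0 h7
  rw [auxP, div_le_div_iff₀ hP (by norm_num)]
  linarith

lemma aux_two_delta_rpow (h0 : 0 < δ) (h7 : δ < 1/7) :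
    2 * δ ^ auxP δ = (1 - 3*δ) ^ auxP δ := by
  have hτ : 0 < 1 - 3*δ := aux_tau_pos h0 h7
  have hdiv : 0 < (1 - 3*δ)/δ := div_pos hτ h0
  have hlogb : Real.logb 2 ((1-3*δ)/δ) = Real.logb 2 (1-3*δ) - Real.logb 2 δ :=
    Real.logb_div (ne_of_gt hτ) (ne_of_gt h0)
  have hPne : Real.logb 2 (1-3*δ) - Real.logb 2 δ ≠ 0 := ne_of_gt (aux_P_pos h0 h7)
  have h1 : ((1-3*δ)/δ) ^ auxP δ = 2 := by
    rw [← Real.rpow_logb (by norm_num : (0:ℝ) < 2) (by norm_num : (2:ℝ) ≠ 1) hdiv,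
      ← Real.rpow_mul (by norm_num : (0:ℝ) ≤ 2), hlogb, auxP,
      mul_one_div, div_self hPne, Real.rpow_one]
  have h2 : (1 - 3*δ) ^ auxP δ = ((1-3*δ)/δ * δ) ^ auxP δ := by
    rw [div_mul_cancel₀ _ (ne_of_gt h0)]
  rw [h2, Real.mul_rpow (le_of_lt hdiv) (le_of_lt h0), h1]

lemma aux_F_nonneg (h0 : 0 < δ) (h7 : δ < 1/7) {h : ℕ} {k : ℝ} (hk : 0 ≤ k) :
    0 ≤ auxF δ h k := by
  have hτ0 : 0 < 1 - 3*δ := aux_tau_pos h0 h7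
  exact Real.rpow_nonneg (by positivity) _

lemma aux_F_mono (h0 : 0 < δ) (h7 : δ < 1/7) {h h' : ℕ} {k k' : ℝ}
    (hk0 : 0 ≤ k) (hk : k ≤ k') (hh : h' ≤ h) : auxF δ h k ≤ auxF δ h' k' := by
  have hτ0 : 0 < 1 - 3*δ := aux_tau_pos h0 h7
  have hτ1 : 1 - 3*δ ≤ 1 := by nlinarith
  apply Real.rpow_le_rpow (by positivity) ?_ (le_of_lt (aux_p_pos h0 h7))
  have hpow : (1-3*δ)^h ≤ (1-3*δ)^h' := pow_le_pow_of_le_one (le_of_lt hτ0) hτ1 hh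
  have : (2/3) * k * (1-3*δ)^h ≤ (2/3) * k' * (1-3*δ)^h := by
    have := pow_nonneg (le_of_lt hτ0) h
    nlinarith
  calc (2/3) * k * (1-3*δ)^h ≤ (2/3) * k' * (1-3*δ)^h := this
    _ ≤ (2/3) * k' * (1-3*δ)^h' := by nlinarith [pow_nonneg (le_of_lt hτ0) h]

/-- Base case: `F h 1 ≤ 1`. -/
lemma aux_F_le_one (h0 : 0 < δ) (h7 : δ < 1/7) (h : ℕ) : auxF δ h 1 ≤ 1 := by
  have hτ0 : 0 < 1 - 3*δ := aux_tau_pos h0 h7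
  have hτ1 : 1 - 3*δ ≤ 1 := by nlinarith
  apply Real.rpow_le_one (by positivity) ?_ (le_of_lt (aux_p_pos h0 h7))
  have := pow_le_one₀ (le_of_lt hτ0) hτ1 (n := h)
  nlinarith [pow_nonneg (le_of_lt hτ0) h]

/-- Single-branch descent: if `(1-3δ)·k ≤ s` then `F H k ≤ F (H-1) s`. -/
lemma aux_F_branch (h0 : 0 < δ) (h7 : δ < 1/7) {H : ℕ} {k s : ℝ}
    (hk0 : 0 ≤ k) (hs : (1 - 3*δ) * k ≤ s) :
    auxF δ (H + 1) k ≤ auxF δ H s := by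
  have hτ0 : 0 < 1 - 3*δ := aux_tau_pos h0 h7
  apply Real.rpow_le_rpow (by positivity) ?_ (le_of_lt (aux_p_pos h0 h7))
  have : (2/3) * k * (1-3*δ)^(H+1) = (2/3) * ((1-3*δ)*k) * (1-3*δ)^H := by ring
  rw [this]
  have := pow_nonneg (le_of_lt hτ0) H
  nlinarith

/-- Diagonal combination: if `δ·k ≤ a` and `δ·k ≤ d` then
`F (H+2) k ≤ F H a + F H d`. -/
lemma aux_F_diag (h0 : 0 < δ) (h7 : δ < 1/7) {H : ℕ} {k a d : ℝ}
    (hk0 : 0 ≤ k) (ha : δ * k ≤ a) (hd : δ * k ≤ d) :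
    auxF δ (H + 2) k ≤ auxF δ H a + auxF δ H d := by
  have hτ0 : 0 < 1 - 3*δ := aux_tau_pos h0 h7
  have hp0 := le_of_lt (aux_p_pos h0 h7)
  have hstep : auxF δ (H+2) k ≤ 2 * auxF δ H (δ * k) := by
    have hδk : 0 ≤ δ * k := by positivity
    have hsplit : auxF δ H (δ * k) = δ ^ auxP δ * ((2/3) * k * (1-3*δ)^H) ^ auxP δ := by
      rw [auxF, show (2/3) * (δ*k) * (1-3*δ)^H = δ * ((2/3) * k * (1-3*δ)^H) by ring,
        Real.mul_rpow (le_of_lt h0) (by positivity)]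
    rw [hsplit, ← mul_assoc, aux_two_delta_rpow h0 h7,
      ← Real.mul_rpow (le_of_lt hτ0) (by positivity)]
    apply Real.rpow_le_rpow (by positivity) ?_ hp0
    have h1 : (1-3*δ) * ((2/3) * k * (1-3*δ)^H) = (2/3) * k * (1-3*δ)^(H+1) := by ring
    rw [h1]
    have hpow : (1-3*δ)^(H+2) ≤ (1-3*δ)^(H+1) :=
      pow_le_pow_of_le_one (le_of_lt hτ0) (by nlinarith) (by omega)
    nlinarith
  have h1 : auxF δ H (δ*k) ≤ auxF δ H a := aux_F_mono h0 h7 (by positivity) ha (le_refl _)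
  have h2 : auxF δ H (δ*k) ≤ auxF δ H d := aux_F_mono h0 h7 (by positivity) hd (le_refl _)
  linarith

lemma aux_sixth_twothirds (h0 : 0 < δ) (h7 : δ < 1/7) :
    1 ≤ (1/6:ℝ) ^ auxP δ + (2/3:ℝ) ^ auxP δ := by
  have hp := aux_p_pos h0 h7
  have hph := aux_p_le_half h0 h7
  have h1 : (1/6:ℝ) ^ (1/2:ℝ) ≤ (1/6:ℝ) ^ auxP δ :=
    Real.rpow_le_rpow_of_exponent_ge (by norm_num) (by norm_num) hph
  have h2 : (2/3:ℝ) ^ (1/2:ℝ) ≤ (2/3:ℝ) ^ auxP δ :=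
    Real.rpow_le_rpow_of_exponent_ge (by norm_num) (by norm_num) hph
  have s1 : (1/5:ℝ) ≤ (1/6:ℝ) ^ (1/2:ℝ) := by
    rw [← Real.sqrt_eq_rpow]
    rw [Real.le_sqrt (by norm_num) (by norm_num)]
    norm_num
  have s2 : (4/5:ℝ) ≤ (2/3:ℝ) ^ (1/2:ℝ) := by
    rw [← Real.sqrt_eq_rpow]
    rw [Real.le_sqrt (by norm_num) (by norm_num)]
    norm_num
  linarith

/-- Combination step for class `𝓒ₘ`. -/
lemma aux_C_combine (h0 : 0 < δ) (h7 : δ < 1/7) (m : ℕ) {k1 k4 : ℝ}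
    (hk1 : (2:ℝ)^m / 3 ≤ k1) (hk4 : (2:ℝ)^m + k1 ≤ k4) :
    auxF δ (2*m+2) (2^(m+1)) ≤ auxF δ (2*m) k1 + auxF δ (2*m+2) k4 := by
  have hτ0 : 0 < 1 - 3*δ := aux_tau_pos h0 h7
  have hτ1 : 1 - 3*δ ≤ 1 := by nlinarith
  have hp0 := le_of_lt (aux_p_pos h0 h7)
  have h2m : (0:ℝ) < 2^m := by positivity
  set Z : ℝ := (2/3) * 2^(m+1) * (1-3*δ)^(2*m+2) with hZ
  have hZpos : 0 < Z := by positivity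
  have hterm1 : ((1/6) * Z) ^ auxP δ ≤ auxF δ (2*m) k1 := by
    apply Real.rpow_le_rpow (by positivity) ?_ hp0
    have hpow : (1-3*δ)^(2*m+2) ≤ (1-3*δ)^(2*m) :=
      pow_le_pow_of_le_one (le_of_lt hτ0) hτ1 (by omega)
    have hbase : (1/6) * Z = (2/3) * ((2:ℝ)^m/3) * (1-3*δ)^(2*m+2) := by
      rw [hZ, pow_succ]; ring
    rw [hbase]
    have hkk : (0:ℝ) ≤ (2:ℝ)^m/3 := by positivity
    have := pow_nonneg (le_of_lt hτ0) (2*m)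
    nlinarith
  have hterm4 : ((2/3) * Z) ^ auxP δ ≤ auxF δ (2*m+2) k4 := by
    apply Real.rpow_le_rpow (by positivity) ?_ hp0
    have hbase : (2/3) * Z = (2/3) * ((4/3) * (2:ℝ)^m) * (1-3*δ)^(2*m+2) := by
      rw [hZ]; rw [pow_succ]; ring
    rw [hbase]
    have hk4' : (4/3) * (2:ℝ)^m ≤ k4 := by linarith
    have := pow_nonneg (le_of_lt hτ0) (2*m+2)
    nlinarith
  have hsplit1 : ((1/6) * Z) ^ auxP δ = (1/6:ℝ) ^ auxP δ * Z ^ auxP δ :=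
    Real.mul_rpow (by norm_num) (le_of_lt hZpos)
  have hsplit4 : ((2/3) * Z) ^ auxP δ = (2/3:ℝ) ^ auxP δ * Z ^ auxP δ :=
    Real.mul_rpow (by norm_num) (le_of_lt hZpos)
  have hsum := aux_sixth_twothirds h0 h7
  have hZp : 0 ≤ Z ^ auxP δ := Real.rpow_nonneg (le_of_lt hZpos) _
  have : Z ^ auxP δ ≤ ((1/6) * Z) ^ auxP δ + ((2/3) * Z) ^ auxP δ := by
    rw [hsplit1, hsplit4]; nlinarith
  have hZF : auxF δ (2*m+2) (2^(m+1)) = Z ^ auxP δ := by rw [auxF, hZ]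
  rw [hZF]
  linarith

/-- The target `2^(βm - c)` equals `F (2m) (2^m)`. -/
lemma aux_F_target (h0 : 0 < δ) (h7 : δ < 1/7) (m : ℕ) :
    (2:ℝ) ^ ((1 + 2 * Real.logb 2 (1 - 3 * δ)) /
          (Real.logb 2 (1 - 3 * δ) - Real.logb 2 δ) * m -
        (Real.logb 2 3 - 1) / (Real.logb 2 (1 - 3 * δ) - Real.logb 2 δ))
      = auxF δ (2*m) (2^m) := by
  have hτ0 : 0 < 1 - 3*δ := aux_tau_pos h0 h7
  have hPne : Real.logb 2 (1-3*δ) - Real.logb 2 δ ≠ 0 := ne_of_gt (aux_P_pos h0 h7)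
  have hbasepos : (0:ℝ) < (2/3) * 2^m * (1-3*δ)^(2*m) := by positivity
  rw [auxF, ← Real.rpow_logb (by norm_num : (0:ℝ) < 2) (by norm_num : (2:ℝ) ≠ 1) hbasepos,
    ← Real.rpow_mul (by norm_num : (0:ℝ) ≤ 2)]
  congr 1
  have hlog : Real.logb 2 ((2/3) * 2^m * (1-3*δ)^(2*m))
      = (1 - Real.logb 2 3) + m + (2*m) * Real.logb 2 (1-3*δ) := by
    rw [Real.logb_mul (by positivity) (by positivity),
      Real.logb_mul (by norm_num) (by positivity), Real.logb_pow, Real.logb_pow,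
      Real.logb_div (by norm_num) (by norm_num)]
    have h22 : Real.logb 2 2 = 1 := Real.logb_self_eq_one (by norm_num)
    rw [h22]
    push_cast
    ring
  rw [hlog, auxP]
  field_simp
  ring

end RealFacts

lemma aux_card_split {L : Type} (X : Finset L) (P Q : L → Prop)
    [DecidablePred P] [DecidablePred Q]
    (h : ∀ x ∈ X, P x ↔ ¬ Q x) :
    X.card = (X.filter P).card + (X.filter Q).card := by
  classical
  have hQ : X.filter Q = X.filter (fun x => ¬ P x) := by
    apply Finset.filter_congr
    intro x hx
    simp only [h x hx]
    tauto
  rw [hQ, Finset.card_filter_add_card_filter_not]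

namespace RTree

variable {L : Type}

lemma aux_mem_node_iff {l r : RTree L} (h : (node l r).IsPhylo) {x : L}
    (hx : x ∈ (node l r).leafList) : x ∈ l.leafList ↔ ¬ x ∈ r.leafList := by
  obtain ⟨_, _, hdisj⟩ := aux_phylo_node h
  simp only [leafList, List.mem_append] at hx
  constructor
  · intro hl hr; exact hdisj hl hr
  · intro hr; rcases hx with h' | h'
    · exact h'
    · exact absurd h' hr

-- The key recursion lemma: two phylogenetic trees sharing a nonempty common leaf
-- subset `X` have a common subtree with at least `F (h₁+h₂) |X|` leaves.
set_option maxHeartbeats 2000000 in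
open scoped Classical in
lemma aux_key (δ : ℝ) (h0 : 0 < δ) (h7 : δ < 1/7) :
    ∀ (H : ℕ) (T₁ T₂ : RTree L) (X : Finset L), T₁.IsPhylo → T₂.IsPhylo →
      T₁.height + T₂.height ≤ H →
      (∀ x ∈ X, x ∈ T₁.leafList) → (∀ x ∈ X, x ∈ T₂.leafList) → X.Nonempty →
      ∃ S : RTree L, S.IsPhylo ∧ Embeds S T₁ ∧ Embeds S T₂ ∧
        auxF δ (T₁.height + T₂.height) X.card ≤ (S.numLeaves : ℝ) := by
  have single : ∀ (T₁ T₂ : RTree L) (X : Finset L), X.card = 1 →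
      (∀ x ∈ X, x ∈ T₁.leafList) → (∀ x ∈ X, x ∈ T₂.leafList) →
      ∃ S : RTree L, S.IsPhylo ∧ Embeds S T₁ ∧ Embeds S T₂ ∧
        auxF δ (T₁.height + T₂.height) X.card ≤ (S.numLeaves : ℕ) := by
    intro T₁ T₂ X hcard hX1 hX2
    obtain ⟨x, hx⟩ := Finset.card_eq_one.mp hcard
    refine ⟨leaf x, by simp [IsPhylo, leafList], ?_, ?_, ?_⟩
    · exact aux_embeds_leaf_of_mem (hX1 x (by simp [hx]))
    · exact aux_embeds_leaf_of_mem (hX2 x (by simp [hx]))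
    · rw [hcard]
      have : (leaf x : RTree L).numLeaves = 1 := by simp [numLeaves, leafList]
      rw [this]
      push_cast
      exact aux_F_le_one h0 h7 _
  intro H
  induction H with
  | zero =>
      intro T₁ T₂ X h₁ h₂ hH hX1 hX2 hne
      have hh1 : T₁.height = 0 := by omega
      have hh2 : T₂.height = 0 := by omega
      have hcard : X.card = 1 := by
        cases T₁ with
        | node l r => simp [height] at hh1
        | leaf b =>
            have hsub : X ⊆ {b} := by
              intro x hx
              have := hX1 x hx
              simp [leafList] at this
              simp [this]
            have := Finset.card_le_card hsub
            simp at this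
            have := Finset.card_pos.mpr hne
            omega
      exact single T₁ T₂ X hcard hX1 hX2
  | succ H ih =>
      intro T₁ T₂ X h₁ h₂ hH hX1 hX2 hne
      by_cases hcard : X.card = 1
      · exact single T₁ T₂ X hcard hX1 hX2
      have hk2 : 2 ≤ X.card := by
        have := Finset.card_pos.mpr hne
        omega
      -- both trees are nodes
      obtain ⟨A₁, B₁, rfl⟩ : ∃ A₁ B₁, T₁ = node A₁ B₁ := by
        cases T₁ with
        | leaf b =>
            exfalso
            have hsub : X ⊆ {b} := by
              intro x hx
              have := hX1 x hx
              simp [leafList] at this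
              simp [this]
            have := Finset.card_le_card hsub
            simp at this
            omega
        | node l r => exact ⟨l, r, rfl⟩
      obtain ⟨A₂, B₂, rfl⟩ : ∃ A₂ B₂, T₂ = node A₂ B₂ := by
        cases T₂ with
        | leaf b =>
            exfalso
            have hsub : X ⊆ {b} := by
              intro x hx
              have := hX2 x hx
              simp [leafList] at this
              simp [this]
            have := Finset.card_le_card hsub
            simp at this
            omega
        | node l r => exact ⟨l, r, rfl⟩
      obtain ⟨hA₁, hB₁, hd₁⟩ := aux_phylo_node h₁
      obtain ⟨hA₂, hB₂, hd₂⟩ := aux_phylo_node h₂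
      set XA1 := X.filter (· ∈ A₁.leafList) with hXA1
      set XB1 := X.filter (· ∈ B₁.leafList) with hXB1
      set XA2 := X.filter (· ∈ A₂.leafList) with hXA2
      set XB2 := X.filter (· ∈ B₂.leafList) with hXB2
      set XAA := XA1.filter (· ∈ A₂.leafList) with hXAA
      set XAB := XA1.filter (· ∈ B₂.leafList) with hXAB
      set XBA := XB1.filter (· ∈ A₂.leafList) with hXBA
      set XBB := XB1.filter (· ∈ B₂.leafList) with hXBB
      have hs1 : X.card = XA1.card + XB1.card := by
        rw [hXA1, hXB1]
        exact aux_card_split X _ _ (fun x hx => aux_mem_node_iff h₁ (hX1 x hx))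
      have hs2 : X.card = XA2.card + XB2.card := by
        rw [hXA2, hXB2]
        exact aux_card_split X _ _ (fun x hx => aux_mem_node_iff h₂ (hX2 x hx))
      have hsA : XA1.card = XAA.card + XAB.card := by
        rw [hXAA, hXAB]
        apply aux_card_split
        intro x hx
        exact aux_mem_node_iff h₂ (hX2 x (Finset.mem_of_mem_filter x hx))
      have hsB : XB1.card = XBA.card + XBB.card := by
        rw [hXBA, hXBB]
        apply aux_card_split
        intro x hx
        exact aux_mem_node_iff h₂ (hX2 x (Finset.mem_of_mem_filter x hx))
      have hsA2 : XA2.card = XAA.card + XBA.card := by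
        have hsplit : XA2.card = (XA2.filter (· ∈ A₁.leafList)).card
            + (XA2.filter (· ∈ B₁.leafList)).card := by
          apply aux_card_split
          intro x hx
          exact aux_mem_node_iff h₁ (hX1 x (Finset.mem_of_mem_filter x hx))
        have e1 : XA2.filter (· ∈ A₁.leafList) = XAA := by
          rw [hXAA, hXA1, hXA2, Finset.filter_comm]
        have e2 : XA2.filter (· ∈ B₁.leafList) = XBA := by
          rw [hXBA, hXB1, hXA2, Finset.filter_comm]
        rw [hsplit, e1, e2]
      have hsB2 : XB2.card = XAB.card + XBB.card := by
        have hsplit : XB2.card = (XB2.filter (· ∈ A₁.leafList)).card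
            + (XB2.filter (· ∈ B₁.leafList)).card := by
          apply aux_card_split
          intro x hx
          exact aux_mem_node_iff h₁ (hX1 x (Finset.mem_of_mem_filter x hx))
        have e1 : XB2.filter (· ∈ A₁.leafList) = XAB := by
          rw [hXAB, hXA1, hXB2, Finset.filter_comm]
        have e2 : XB2.filter (· ∈ B₁.leafList) = XBB := by
          rw [hXBB, hXB1, hXB2, Finset.filter_comm]
        rw [hsplit, e1, e2]
      set k := X.card with hk
      set a := XAA.card with ha
      set b := XAB.card with hb
      set c := XBA.card with hc
      set d := XBB.card with hd
      -- heights
      have hhA1 : A₁.height + 1 ≤ (node A₁ B₁).height := by simp only [height]; omega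
      have hhB1 : B₁.height + 1 ≤ (node A₁ B₁).height := by simp only [height]; omega
      have hhA2 : A₂.height + 1 ≤ (node A₂ B₂).height := by simp only [height]; omega
      have hhB2 : B₂.height + 1 ≤ (node A₂ B₂).height := by simp only [height]; omega
      have hk0 : (0:ℝ) ≤ (k:ℝ) := by positivity
      have hkpos : (0:ℝ) < (k:ℝ) := by
        have : 0 < k := by omega
        exact_mod_cast this
      have hk_abcd : k = a + b + c + d := by omega
      have memAA : ∀ x ∈ XAA, x ∈ A₁.leafList ∧ x ∈ A₂.leafList := by
        intro x hx
        simp only [hXAA, hXA1, Finset.mem_filter] at hx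
        exact ⟨hx.1.2, hx.2⟩
      have memAB : ∀ x ∈ XAB, x ∈ A₁.leafList ∧ x ∈ B₂.leafList := by
        intro x hx
        simp only [hXAB, hXA1, Finset.mem_filter] at hx
        exact ⟨hx.1.2, hx.2⟩
      have memBA : ∀ x ∈ XBA, x ∈ B₁.leafList ∧ x ∈ A₂.leafList := by
        intro x hx
        simp only [hXBA, hXB1, Finset.mem_filter] at hx
        exact ⟨hx.1.2, hx.2⟩
      have memBB : ∀ x ∈ XBB, x ∈ B₁.leafList ∧ x ∈ B₂.leafList := by
        intro x hx
        simp only [hXBB, hXB1, Finset.mem_filter] at hx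
        exact ⟨hx.1.2, hx.2⟩
      have memA1 : ∀ x ∈ XA1, x ∈ A₁.leafList := by
        intro x hx; simp only [hXA1, Finset.mem_filter] at hx; exact hx.2
      have memB1 : ∀ x ∈ XB1, x ∈ B₁.leafList := by
        intro x hx; simp only [hXB1, Finset.mem_filter] at hx; exact hx.2
      have memA2 : ∀ x ∈ XA2, x ∈ A₂.leafList := by
        intro x hx; simp only [hXA2, Finset.mem_filter] at hx; exact hx.2
      have memB2 : ∀ x ∈ XB2, x ∈ B₂.leafList := by
        intro x hx; simp only [hXB2, Finset.mem_filter] at hx; exact hx.2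
      have subX : ∀ Y : Finset L, (Y = XA1 ∨ Y = XB1 ∨ Y = XA2 ∨ Y = XB2) →
          ∀ x ∈ Y, x ∈ X := by
        intro Y hY x hx
        rcases hY with rfl | rfl | rfl | rfl <;>
          exact Finset.mem_of_mem_filter x hx
      have hδ0 : 0 ≤ δ := le_of_lt h0
      clear hXA1 hXB1 hXA2 hXB2 hXAA hXAB hXBA hXBB hk
      clear_value XA1 XB1 XA2 XB2 XAA XAB XBA XBB k a b c d
      by_cases hC1 : δ * k ≤ (a:ℝ) ∧ δ * k ≤ (d:ℝ)
      · -- main diagonal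
        obtain ⟨hca, hcd⟩ := hC1
        have hapos : 0 < a := by
          have : (0:ℝ) < (a:ℝ) := lt_of_lt_of_le (mul_pos h0 hkpos) hca
          exact_mod_cast this
        have hdpos : 0 < d := by
          have : (0:ℝ) < (d:ℝ) := lt_of_lt_of_le (mul_pos h0 hkpos) hcd
          exact_mod_cast this
        obtain ⟨S₁, hS₁p, hS₁1, hS₁2, hS₁n⟩ := ih A₁ A₂ XAA hA₁ hA₂
          (by omega) (fun x hx => (memAA x hx).1) (fun x hx => (memAA x hx).2)
          (Finset.card_pos.mp (ha ▸ hapos))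
        obtain ⟨S₂, hS₂p, hS₂1, hS₂2, hS₂n⟩ := ih B₁ B₂ XBB hB₁ hB₂
          (by omega) (fun x hx => (memBB x hx).1) (fun x hx => (memBB x hx).2)
          (Finset.card_pos.mp (hd ▸ hdpos))
        rw [← ha] at hS₁n
        rw [← hd] at hS₂n
        refine ⟨node S₁ S₂, ?_, Embeds.pair hS₁1 hS₂1, Embeds.pair hS₁2 hS₂2, ?_⟩
        · rw [IsPhylo, leafList, List.nodup_append]
          refine ⟨hS₁p, hS₂p, ?_⟩
          intro x hx1 y hx2 hxy
          subst hxy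
          exact hd₁ (aux_embeds_mem hS₁1 x hx1) (aux_embeds_mem hS₂1 x hx2)
        · have hnum : (node S₁ S₂).numLeaves = S₁.numLeaves + S₂.numLeaves := by
            simp [numLeaves, leafList]
          rw [hnum]
          obtain ⟨E', hE'⟩ : ∃ E',
              (node A₁ B₁).height + (node A₂ B₂).height = E' + 2 := by
            refine ⟨(node A₁ B₁).height + (node A₂ B₂).height - 2, ?_⟩
            simp only [height]
            omega
          push_cast
          calc auxF δ ((node A₁ B₁).height + (node A₂ B₂).height) k
              = auxF δ (E' + 2) k := by rw [hE']
            _ ≤ auxF δ E' a + auxF δ E' d := aux_F_diag h0 h7 hk0 hca hcd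
            _ ≤ auxF δ (A₁.height + A₂.height) a + auxF δ (B₁.height + B₂.height) d := by
                refine add_le_add (aux_F_mono h0 h7 (by positivity) (le_refl _) (by omega))
                  (aux_F_mono h0 h7 (by positivity) (le_refl _) (by omega))
            _ ≤ (S₁.numLeaves : ℝ) + (S₂.numLeaves : ℝ) := add_le_add hS₁n hS₂n
      by_cases hC2 : δ * k ≤ (b:ℝ) ∧ δ * k ≤ (c:ℝ)
      · -- anti-diagonal
        obtain ⟨hcb, hcc⟩ := hC2
        have hbpos : 0 < b := by
          have : (0:ℝ) < (b:ℝ) := lt_of_lt_of_le (mul_pos h0 hkpos) hcb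
          exact_mod_cast this
        have hcpos : 0 < c := by
          have : (0:ℝ) < (c:ℝ) := lt_of_lt_of_le (mul_pos h0 hkpos) hcc
          exact_mod_cast this
        obtain ⟨S₁, hS₁p, hS₁1, hS₁2, hS₁n⟩ := ih A₁ B₂ XAB hA₁ hB₂
          (by omega) (fun x hx => (memAB x hx).1) (fun x hx => (memAB x hx).2)
          (Finset.card_pos.mp (hb ▸ hbpos))
        obtain ⟨S₂, hS₂p, hS₂1, hS₂2, hS₂n⟩ := ih B₁ A₂ XBA hB₁ hA₂
          (by omega) (fun x hx => (memBA x hx).1) (fun x hx => (memBA x hx).2)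
          (Finset.card_pos.mp (hc ▸ hcpos))
        rw [← hb] at hS₁n
        rw [← hc] at hS₂n
        refine ⟨node S₁ S₂, ?_, Embeds.pair hS₁1 hS₂1, Embeds.pair_swap hS₁2 hS₂2, ?_⟩
        · rw [IsPhylo, leafList, List.nodup_append]
          refine ⟨hS₁p, hS₂p, ?_⟩
          intro x hx1 y hx2 hxy
          subst hxy
          exact hd₁ (aux_embeds_mem hS₁1 x hx1) (aux_embeds_mem hS₂1 x hx2)
        · have hnum : (node S₁ S₂).numLeaves = S₁.numLeaves + S₂.numLeaves := by
            simp [numLeaves, leafList]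
          rw [hnum]
          obtain ⟨E', hE'⟩ : ∃ E',
              (node A₁ B₁).height + (node A₂ B₂).height = E' + 2 := by
            refine ⟨(node A₁ B₁).height + (node A₂ B₂).height - 2, ?_⟩
            simp only [height]
            omega
          push_cast
          calc auxF δ ((node A₁ B₁).height + (node A₂ B₂).height) k
              = auxF δ (E' + 2) k := by rw [hE']
            _ ≤ auxF δ E' b + auxF δ E' c := aux_F_diag h0 h7 hk0 hcb hcc
            _ ≤ auxF δ (A₁.height + B₂.height) b + auxF δ (B₁.height + A₂.height) c := by
                refine add_le_add (aux_F_mono h0 h7 (by positivity) (le_refl _) (by omega))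
                  (aux_F_mono h0 h7 (by positivity) (le_refl _) (by omega))
            _ ≤ (S₁.numLeaves : ℝ) + (S₂.numLeaves : ℝ) := add_le_add hS₁n hS₂n
      -- otherwise one of the four rows/columns is large
      · obtain ⟨E', hE'⟩ : ∃ E',
            (node A₁ B₁).height + (node A₂ B₂).height = E' + 1 := by
          refine ⟨(node A₁ B₁).height + (node A₂ B₂).height - 1, ?_⟩
          simp only [height]
          omega
        have branch1 : ∀ C₁ : RTree L, ∀ Y : Finset L, C₁.IsPhylo →
            (∀ x ∈ Y, x ∈ C₁.leafList) → (∀ x ∈ Y, x ∈ X) →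
            C₁.height + (node A₂ B₂).height ≤ E' →
            (1 - 3*δ) * k ≤ (Y.card : ℝ) →
            ∃ S : RTree L, S.IsPhylo ∧ Embeds S C₁ ∧ Embeds S (node A₂ B₂) ∧
              auxF δ ((node A₁ B₁).height + (node A₂ B₂).height) k ≤ (S.numLeaves : ℝ) := by
          intro C₁ Y hC₁ hmem hsubX hht hY
          have hYpos : 0 < Y.card := by
            have hτk : (0:ℝ) < (1-3*δ) * k := by
              have := aux_tau_pos h0 h7
              positivity
            have : (0:ℝ) < (Y.card : ℝ) := lt_of_lt_of_le hτk hY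
            exact_mod_cast this
          obtain ⟨S, hSp, hS1, hS2, hSn⟩ := ih C₁ (node A₂ B₂) Y hC₁ h₂
            (by omega) hmem (fun x hx => hX2 x (hsubX x hx))
            (Finset.card_pos.mp hYpos)
          refine ⟨S, hSp, hS1, hS2, ?_⟩
          calc auxF δ ((node A₁ B₁).height + (node A₂ B₂).height) k
              = auxF δ (E' + 1) k := by rw [hE']
            _ ≤ auxF δ E' (Y.card : ℝ) := aux_F_branch h0 h7 hk0 hY
            _ ≤ auxF δ (C₁.height + (node A₂ B₂).height) (Y.card : ℝ) :=
                aux_F_mono h0 h7 (by positivity) (le_refl _) hht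
            _ ≤ (S.numLeaves : ℝ) := hSn
        have branch2 : ∀ C₂ : RTree L, ∀ Y : Finset L, C₂.IsPhylo →
            (∀ x ∈ Y, x ∈ C₂.leafList) → (∀ x ∈ Y, x ∈ X) →
            (node A₁ B₁).height + C₂.height ≤ E' →
            (1 - 3*δ) * k ≤ (Y.card : ℝ) →
            ∃ S : RTree L, S.IsPhylo ∧ Embeds S (node A₁ B₁) ∧ Embeds S C₂ ∧
              auxF δ ((node A₁ B₁).height + (node A₂ B₂).height) k ≤ (S.numLeaves : ℝ) := by
          intro C₂ Y hC₂ hmem hsubX hht hY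
          have hYpos : 0 < Y.card := by
            have hτk : (0:ℝ) < (1-3*δ) * k := by
              have := aux_tau_pos h0 h7
              positivity
            have : (0:ℝ) < (Y.card : ℝ) := lt_of_lt_of_le hτk hY
            exact_mod_cast this
          obtain ⟨S, hSp, hS1, hS2, hSn⟩ := ih (node A₁ B₁) C₂ Y h₁ hC₂
            (by omega) (fun x hx => hX1 x (hsubX x hx)) hmem
            (Finset.card_pos.mp hYpos)
          refine ⟨S, hSp, hS1, hS2, ?_⟩
          calc auxF δ ((node A₁ B₁).height + (node A₂ B₂).height) k
              = auxF δ (E' + 1) k := by rw [hE']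
            _ ≤ auxF δ E' (Y.card : ℝ) := aux_F_branch h0 h7 hk0 hY
            _ ≤ auxF δ ((node A₁ B₁).height + C₂.height) (Y.card : ℝ) :=
                aux_F_mono h0 h7 (by positivity) (le_refl _) hht
            _ ≤ (S.numLeaves : ℝ) := hSn
        have habcd : ((a:ℝ) + b + c + d) = (k:ℝ) := by
          rw [hk_abcd]; push_cast; ring
        rcases not_and_or.mp hC1 with hsm1 | hsm1 <;>
          rcases not_and_or.mp hC2 with hsm2 | hsm2 <;>
          push_neg at hsm1 hsm2
        · -- a and b small : XB1 is large
          have hbig : (1 - 3*δ) * k ≤ (XB1.card : ℝ) := by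
            have : (XB1.card : ℝ) = (c:ℝ) + d := by rw [hsB]; norm_cast
            rw [this]
            nlinarith [mul_nonneg hδ0 hk0, habcd]
          obtain ⟨S, hSp, hS1, hS2, hSn⟩ := branch1 B₁ XB1 hB₁ memB1
            (subX XB1 (by tauto)) (by simp only [height] at hE' ⊢; omega) hbig
          exact ⟨S, hSp, Embeds.right hS1, hS2, hSn⟩
        · -- a and c small : XB2 is large
          have hbig : (1 - 3*δ) * k ≤ (XB2.card : ℝ) := by
            have : (XB2.card : ℝ) = (b:ℝ) + d := by rw [hsB2]; norm_cast
            rw [this]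
            nlinarith [mul_nonneg hδ0 hk0, habcd]
          obtain ⟨S, hSp, hS1, hS2, hSn⟩ := branch2 B₂ XB2 hB₂ memB2
            (subX XB2 (by tauto)) (by simp only [height] at hE' ⊢; omega) hbig
          exact ⟨S, hSp, hS1, Embeds.right hS2, hSn⟩
        · -- d and b small : XA2 is large
          have hbig : (1 - 3*δ) * k ≤ (XA2.card : ℝ) := by
            have : (XA2.card : ℝ) = (a:ℝ) + c := by rw [hsA2]; norm_cast
            rw [this]
            nlinarith [mul_nonneg hδ0 hk0, habcd]
          obtain ⟨S, hSp, hS1, hS2, hSn⟩ := branch2 A₂ XA2 hA₂ memA2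
            (subX XA2 (by tauto)) (by simp only [height] at hE' ⊢; omega) hbig
          exact ⟨S, hSp, hS1, Embeds.left hS2, hSn⟩
        · -- d and c small : XA1 is large
          have hbig : (1 - 3*δ) * k ≤ (XA1.card : ℝ) := by
            have : (XA1.card : ℝ) = (a:ℝ) + b := by rw [hsA]; norm_cast
            rw [this]
            nlinarith [mul_nonneg hδ0 hk0, habcd]
          obtain ⟨S, hSp, hS1, hS2, hSn⟩ := branch1 A₁ XA1 hA₁ memA1
            (subX XA1 (by tauto)) (by simp only [height] at hE' ⊢; omega) hbig
          exact ⟨S, hSp, Embeds.left hS1, hS2, hSn⟩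

lemma aux_umast_ge {T₁ T₂ S₁ S₂ : RTree L} (hp1 : S₁.IsPhylo) (hp2 : S₂.IsPhylo)
    (e1 : Embeds S₁ T₁) (e2 : Embeds S₂ T₂) (hu : URel S₁ S₂) :
    S₁.numLeaves ≤ umast T₁ T₂ := by
  apply le_csSup
  · refine ⟨T₁.numLeaves, ?_⟩
    rintro n ⟨S₁', S₂', _, _, he1, _, _, rfl⟩
    exact aux_embeds_numLeaves_le he1
  · exact ⟨S₁, S₂, hp1, hp2, e1, e2, hu, rfl⟩

/-- From a common rooted subtree of representatives to a lower bound on `umast`. -/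
lemma aux_common_to_umast {T₁ T₂ R₁ R₂ S : RTree L}
    (hu1 : URel R₁ T₁) (hu2 : URel R₂ T₂) (hSp : S.IsPhylo)
    (e1 : Embeds S R₁) (e2 : Embeds S R₂) :
    S.numLeaves ≤ umast T₁ T₂ := by
  obtain ⟨S₁, hv1, he1⟩ := aux_embeds_urel hu1 S e1
  obtain ⟨S₂, hv2, he2⟩ := aux_embeds_urel hu2 S e2
  have hn : S.numLeaves = S₁.numLeaves := aux_urel_numLeaves hv1
  rw [hn]
  exact aux_umast_ge (aux_urel_phylo (aux_urel_symm hv1) hSp)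
    (aux_urel_phylo (aux_urel_symm hv2) hSp) he1 he2
    (aux_urel_trans (aux_urel_symm hv1) hv2)

open scoped Classical in
lemma aux_filter_eq_toFinset [DecidableEq L] (X : Finset L) (l : List L)
    (h : ∀ x ∈ l, x ∈ X) : X.filter (· ∈ l) = l.toFinset := by
  ext x
  simp only [Finset.mem_filter, List.mem_toFinset]
  exact ⟨fun hx => hx.2, fun hx => ⟨h x hx, hx⟩⟩

lemma aux_card_split3 (X : Finset L) (P Q R : L → Prop)
    [DecidablePred P] [DecidablePred Q] [DecidablePred R]
    (hor : ∀ x ∈ X, P x ∨ Q x ∨ R x)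
    (hPQ : ∀ x ∈ X, P x → ¬ Q x) (hPR : ∀ x ∈ X, P x → ¬ R x)
    (hQR : ∀ x ∈ X, Q x → ¬ R x) :
    X.card = (X.filter P).card + (X.filter Q).card + (X.filter R).card := by
  classical
  have h1 : X.card = (X.filter P).card + (X.filter (fun x => Q x ∨ R x)).card := by
    apply aux_card_split
    intro x hx
    constructor
    · intro hp hqr
      rcases hqr with h' | h'
      · exact hPQ x hx hp h'
      · exact hPR x hx hp h'
    · intro hn
      rcases hor x hx with h' | h' | h'
      · exact h'
      · exact absurd (Or.inl h') hn
      · exact absurd (Or.inr h') hn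
  have h2 : (X.filter (fun x => Q x ∨ R x)).card
      = ((X.filter (fun x => Q x ∨ R x)).filter Q).card
        + ((X.filter (fun x => Q x ∨ R x)).filter R).card := by
    apply aux_card_split
    intro x hx
    have hx' := Finset.mem_filter.mp hx
    constructor
    · intro hq hr; exact hQR x hx'.1 hq hr
    · intro hn
      rcases hx'.2 with h' | h'
      · exact h'
      · exact absurd h' hn
  have e1 : (X.filter (fun x => Q x ∨ R x)).filter Q = X.filter Q := by
    rw [Finset.filter_filter]
    apply Finset.filter_congr
    intro x hx
    tauto
  have e2 : (X.filter (fun x => Q x ∨ R x)).filter R = X.filter R := by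
    rw [Finset.filter_filter]
    apply Finset.filter_congr
    intro x hx
    tauto
  rw [h1, h2, e1, e2, add_assoc]

set_option maxHeartbeats 2000000 in
open scoped Classical in
lemma aux_classC_sub (δ : ℝ) (h0 : 0 < δ) (h7 : δ < 1/7) (mm : ℕ)
    (T₁ T₂ x₁ y₁ z₁ x₂ y₂ z₂ : RTree L)
    (h₁ : T₁.IsPhylo) (h₂ : T₂.IsPhylo)
    (hu1 : URel (node x₁ (node y₁ z₁)) T₁) (hu2 : URel (node x₂ (node y₂ z₂)) T₂)
    (hbx1 : x₁.IsBalanced) (hby1 : y₁.IsBalanced) (hbz1 : z₁.IsBalanced)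
    (hbx2 : x₂.IsBalanced) (hby2 : y₂.IsBalanced) (hbz2 : z₂.IsBalanced)
    (hhx1 : x₁.height = mm) (hhy1 : y₁.height = mm) (hhz1 : z₁.height = mm)
    (hhx2 : x₂.height = mm) (hhy2 : y₂.height = mm) (hhz2 : z₂.height = mm)
    (hLeq : ∀ x, x ∈ T₁.leafList ↔ x ∈ T₂.leafList)
    (hcell : 3 * 2^mm ≤ 9 * ((T₁.leafList.toFinset.filter (· ∈ x₁.leafList)).filter
        (· ∈ x₂.leafList)).card) :
    auxF δ (2*mm+2) (2^(mm+1)) ≤ (umast T₁ T₂ : ℝ) := by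
  have hR₁p : (node x₁ (node y₁ z₁)).IsPhylo := aux_urel_phylo hu1 h₁
  have hR₂p : (node x₂ (node y₂ z₂)).IsPhylo := aux_urel_phylo hu2 h₂
  obtain ⟨hx₁p, hyz₁p, hd1⟩ := aux_phylo_node hR₁p
  obtain ⟨hy₁p, hz₁p, hd1'⟩ := aux_phylo_node hyz₁p
  obtain ⟨hx₂p, hyz₂p, hd2⟩ := aux_phylo_node hR₂p
  obtain ⟨hy₂p, hz₂p, hd2'⟩ := aux_phylo_node hyz₂p
  set X := T₁.leafList.toFinset with hX
  have hXmem : ∀ x, x ∈ X ↔ x ∈ T₁.leafList := by intro x; simp [hX]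
  have hmem1 : ∀ x, x ∈ X ↔ x ∈ (node x₁ (node y₁ z₁)).leafList :=
    fun x => (hXmem x).trans (aux_urel_mem hu1).symm
  have hmem2 : ∀ x, x ∈ X ↔ x ∈ (node x₂ (node y₂ z₂)).leafList :=
    fun x => (hXmem x).trans ((hLeq x).trans (aux_urel_mem hu2).symm)
  have hsub_x1 : ∀ x ∈ x₁.leafList, x ∈ X := by
    intro x hx
    apply (hmem1 x).mpr
    simp only [leafList, List.mem_append]
    exact Or.inl hx
  have hsub_x2 : ∀ x ∈ x₂.leafList, x ∈ X := by
    intro x hx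
    apply (hmem2 x).mpr
    simp only [leafList, List.mem_append]
    exact Or.inl hx
  -- cards of branches
  have hbr : ∀ u : RTree L, u.IsBalanced → u.height = mm → u.leafList.length = 2^mm := by
    intro u hb hh
    have := aux_balanced_numLeaves hb
    rw [numLeaves] at this
    rw [this, hh]
  have hcard_row : (X.filter (· ∈ x₁.leafList)).card = 2^mm := by
    rw [aux_filter_eq_toFinset X _ hsub_x1, List.toFinset_card_of_nodup hx₁p,
      hbr x₁ hbx1 hhx1]
  have hcard_col : (X.filter (· ∈ x₂.leafList)).card = 2^mm := by
    rw [aux_filter_eq_toFinset X _ hsub_x2, List.toFinset_card_of_nodup hx₂p,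
      hbr x₂ hbx2 hhx2]
  have hXcard : X.card = 3 * 2^mm := by
    rw [hX, List.toFinset_card_of_nodup h₁]
    have h1 : (node x₁ (node y₁ z₁)).numLeaves = T₁.leafList.length :=
      aux_urel_numLeaves hu1
    rw [← h1]
    simp only [numLeaves, leafList, List.length_append]
    rw [hbr x₁ hbx1 hhx1, hbr y₁ hby1 hhy1, hbr z₁ hbz1 hhz1]
    ring
  set CE := (X.filter (· ∈ x₁.leafList)).filter (· ∈ x₂.leafList) with hCE
  set W := X.filter
    (fun x => (x ∈ y₁.leafList ∨ x ∈ z₁.leafList) ∧ (x ∈ y₂.leafList ∨ x ∈ z₂.leafList))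
    with hW
  have honeA : ∀ x ∈ X, (x ∈ x₁.leafList ↔ ¬(x ∈ y₁.leafList ∨ x ∈ z₁.leafList)) := by
    intro x hx
    have hx' := (hmem1 x).mp hx
    have h' := aux_mem_node_iff hR₁p hx'
    simpa only [leafList, List.mem_append] using h'
  have honeB : ∀ x ∈ X, (x ∈ x₂.leafList ↔ ¬(x ∈ y₂.leafList ∨ x ∈ z₂.leafList)) := by
    intro x hx
    have hx' := (hmem2 x).mp hx
    have h' := aux_mem_node_iff hR₂p hx'
    simpa only [leafList, List.mem_append] using h'
  -- counting identity
  have hsplit : X.card = (X.filter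
      (fun x => x ∈ x₁.leafList ∨ x ∈ x₂.leafList)).card + W.card := by
    rw [hW]
    apply aux_card_split
    intro x hx
    have hA := honeA x hx
    have hB := honeB x hx
    tauto
  have hCE_inter : CE = X.filter (· ∈ x₁.leafList) ∩ X.filter (· ∈ x₂.leafList) := by
    rw [hCE, Finset.filter_filter, ← Finset.filter_and]
  have hunion : (X.filter (fun x => x ∈ x₁.leafList ∨ x ∈ x₂.leafList)).card + CE.card
      = (X.filter (· ∈ x₁.leafList)).card + (X.filter (· ∈ x₂.leafList)).card := by
    rw [Finset.filter_or, hCE_inter]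
    exact Finset.card_union_add_card_inter _ _
  have hWcard : W.card = 2^mm + CE.card := by omega
  have hCEpos : 0 < CE.card := by
    have h2p : 0 < 2^mm := Nat.pow_pos (by norm_num)
    omega
  -- heights
  have e_h1 : x₁.height + x₂.height = 2*mm := by omega
  have e_h4 : (node y₁ z₁).height + (node y₂ z₂).height = 2*mm + 2 := by
    simp only [height, hhy1, hhz1, hhy2, hhz2, max_self]
    omega
  -- the two common subtrees
  obtain ⟨S₁, hS₁p, eS₁1, eS₁2, hn₁⟩ := aux_key δ h0 h7 (x₁.height + x₂.height)
    x₁ x₂ CE hx₁p hx₂p (le_refl _)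
    (fun x hx => by
      simp only [hCE, Finset.mem_filter] at hx
      exact hx.1.2)
    (fun x hx => by
      simp only [hCE, Finset.mem_filter] at hx
      exact hx.2)
    (Finset.card_pos.mp hCEpos)
  obtain ⟨S₄, hS₄p, eS₄1, eS₄2, hn₄⟩ := aux_key δ h0 h7
    ((node y₁ z₁).height + (node y₂ z₂).height)
    (node y₁ z₁) (node y₂ z₂) W hyz₁p hyz₂p (le_refl _)
    (fun x hx => by
      simp only [hW, Finset.mem_filter] at hx
      simp only [leafList, List.mem_append]
      exact hx.2.1)
    (fun x hx => by
      simp only [hW, Finset.mem_filter] at hx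
      simp only [leafList, List.mem_append]
      exact hx.2.2)
    (Finset.card_pos.mp (by omega))
  rw [e_h1] at hn₁
  rw [e_h4] at hn₄
  -- assemble
  have hSp : (node S₁ S₄).IsPhylo := by
    rw [IsPhylo, leafList, List.nodup_append]
    refine ⟨hS₁p, hS₄p, ?_⟩
    intro x hx1 y hx2 hxy
    subst hxy
    exact hd1 (aux_embeds_mem eS₁1 x hx1) (aux_embeds_mem eS₄1 x hx2)
  have e1 : Embeds (node S₁ S₄) (node x₁ (node y₁ z₁)) := Embeds.pair eS₁1 eS₄1
  have e2 : Embeds (node S₁ S₄) (node x₂ (node y₂ z₂)) := Embeds.pair eS₁2 eS₄2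
  have hle : (node S₁ S₄).numLeaves ≤ umast T₁ T₂ :=
    aux_common_to_umast hu1 hu2 hSp e1 e2
  have hnum : (node S₁ S₄).numLeaves = S₁.numLeaves + S₄.numLeaves := by
    simp [numLeaves, leafList]
  have hk1 : (2:ℝ)^mm / 3 ≤ (CE.card : ℝ) := by
    have : (3 * 2^mm : ℝ) ≤ 9 * CE.card := by exact_mod_cast hcell
    linarith
  have hk4 : (2:ℝ)^mm + (CE.card : ℝ) ≤ (W.card : ℝ) := by
    have : (W.card : ℝ) = 2^mm + CE.card := by exact_mod_cast hWcard
    linarith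
  calc auxF δ (2*mm+2) (2^(mm+1))
      ≤ auxF δ (2*mm) (CE.card : ℝ) + auxF δ (2*mm+2) (W.card : ℝ) :=
        aux_C_combine h0 h7 mm hk1 hk4
    _ ≤ (S₁.numLeaves : ℝ) + (S₄.numLeaves : ℝ) := add_le_add hn₁ hn₄
    _ = ((node S₁ S₄).numLeaves : ℝ) := by rw [hnum]; push_cast; ring
    _ ≤ (umast T₁ T₂ : ℝ) := by exact_mod_cast hle

end RTree

/-- Let `δ ∈ (0, 1/3 - 1/(3√2))`,
`β := (1 + 2·log(1-3δ))/(log(1-3δ) - log δ)` and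
`c := (log 3 - 1)/(log(1-3δ) - log δ)`.  If `T₁`, `T₂` are balanced unrooted binary
phylogenetic trees on the same leaf set, both in class `𝓑ₘ` or both in class `𝓒ₘ`,
then `mast{T₁,T₂} ≥ 2^{β·m - c}` (logarithms base 2). -/
theorem stmt_14 {L : Type} (m : ℕ) (T₁ T₂ : RTree L) (δ : ℝ)
    (hδ : δ ∈ Set.Ioo (0 : ℝ) (1/3 - 1/(3 * Real.sqrt 2)))
    (h₁ : T₁.IsPhylo) (h₂ : T₂.IsPhylo)
    (hL : T₁.leafSet = T₂.leafSet)
    (hclass : (RTree.ClassB m T₁ ∧ RTree.ClassB m T₂) ∨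
      (RTree.ClassC m T₁ ∧ RTree.ClassC m T₂)) :
    (2 : ℝ) ^ ((1 + 2 * Real.logb 2 (1 - 3 * δ)) /
          (Real.logb 2 (1 - 3 * δ) - Real.logb 2 δ) * m -
        (Real.logb 2 3 - 1) / (Real.logb 2 (1 - 3 * δ) - Real.logb 2 δ))
      ≤ (RTree.umast T₁ T₂ : ℝ) := by
  classical
  open RTree in
  obtain ⟨hδ0, hδu⟩ := hδ
  have hs2 : Real.sqrt 2 ^ 2 = 2 := Real.sq_sqrt (by norm_num)
  have hsp : (0:ℝ) < Real.sqrt 2 := Real.sqrt_pos.mpr (by norm_num)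
  have hs14 : (1.4:ℝ) ≤ Real.sqrt 2 := by nlinarith
  have hinv : 1/(3*Real.sqrt 2) = Real.sqrt 2 / 6 := by
    rw [div_eq_div_iff (by positivity) (by norm_num)]
    nlinarith
  have h7 : δ < 1/7 := by
    rw [hinv] at hδu
    nlinarith
  have hLeq : ∀ x, x ∈ T₁.leafList ↔ x ∈ T₂.leafList := by
    intro x
    constructor
    · intro hx
      have hx' : x ∈ T₁.leafSet := hx
      rw [hL] at hx'
      exact hx'
    · intro hx
      have hx' : x ∈ T₂.leafSet := hx
      rw [← hL] at hx'
      exact hx'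
  rw [aux_F_target hδ0 h7 m]
  rcases hclass with ⟨hB1, hB2⟩ | ⟨hC1, hC2⟩
  · -- class B
    obtain ⟨l₁, r₁, hu1, hbl1, hbr1, hhl1, hhr1⟩ := hB1
    obtain ⟨l₂, r₂, hu2, hbl2, hbr2, hhl2, hhr2⟩ := hB2
    obtain ⟨mb, rfl⟩ : ∃ mb, m = mb + 1 := ⟨m - 1, by omega⟩
    have hR₁p : (node l₁ r₁).IsPhylo := aux_urel_phylo hu1 h₁
    have hR₂p : (node l₂ r₂).IsPhylo := aux_urel_phylo hu2 h₂
    obtain ⟨hl₁p, hr₁p, hd1⟩ := aux_phylo_node hR₁p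
    have hXmem : ∀ x, x ∈ T₁.leafList.toFinset ↔ x ∈ T₁.leafList := by
      intro x; simp
    have hmem1 : ∀ x ∈ T₁.leafList.toFinset, x ∈ (node l₁ r₁).leafList :=
      fun x hx => (aux_urel_mem hu1).mpr ((hXmem x).mp hx)
    have hmem2 : ∀ x ∈ T₁.leafList.toFinset, x ∈ (node l₂ r₂).leafList :=
      fun x hx => (aux_urel_mem hu2).mpr ((hLeq x).mp ((hXmem x).mp hx))
    have hbrn : ∀ u : RTree L, u.IsBalanced → u.height = mb
        → u.leafList.length = 2^mb := by
      intro u hb hh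
      have := aux_balanced_numLeaves hb
      rw [numLeaves] at this
      rw [this, hh]
    have hXcard : T₁.leafList.toFinset.card = 2^(mb+1) := by
      rw [List.toFinset_card_of_nodup h₁]
      have h1 : (node l₁ r₁).numLeaves = T₁.leafList.length := aux_urel_numLeaves hu1
      rw [← h1]
      simp only [numLeaves, leafList, List.length_append]
      rw [hbrn l₁ hbl1 (by omega), hbrn r₁ hbr1 (by omega), pow_succ]
      ring
    have hXne : T₁.leafList.toFinset.Nonempty := by
      apply Finset.card_pos.mp
      rw [hXcard]
      exact Nat.pow_pos (by norm_num)
    obtain ⟨S, hSp, eS1, eS2, hn⟩ := aux_key δ hδ0 h7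
      ((node l₁ r₁).height + (node l₂ r₂).height)
      (node l₁ r₁) (node l₂ r₂) T₁.leafList.toFinset hR₁p hR₂p (le_refl _)
      hmem1 hmem2 hXne
    have e_h : (node l₁ r₁).height + (node l₂ r₂).height = 2*(mb+1) := by
      simp only [height]
      omega
    rw [e_h, hXcard] at hn
    have hle : S.numLeaves ≤ umast T₁ T₂ := aux_common_to_umast hu1 hu2 hSp eS1 eS2
    calc auxF δ (2*(mb+1)) (2^(mb+1))
        = auxF δ (2*(mb+1)) ((2^(mb+1) : ℕ) : ℝ) := by push_cast; ring_nf
      _ ≤ (S.numLeaves : ℝ) := hn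
      _ ≤ (umast T₁ T₂ : ℝ) := by exact_mod_cast hle
  · -- class C
    obtain ⟨a₁, b₁, c₁, hu1, hba1, hbb1, hbc1, hha1, hhb1, hhc1⟩ := hC1
    obtain ⟨a₂, b₂, c₂, hu2, hba2, hbb2, hbc2, hha2, hhb2, hhc2⟩ := hC2
    obtain ⟨mb, rfl⟩ : ∃ mb, m = mb + 1 := ⟨m - 1, by omega⟩
    have ea1 : a₁.height = mb := by omega
    have eb1 : b₁.height = mb := by omega
    have ec1 : c₁.height = mb := by omega
    have ea2 : a₂.height = mb := by omega
    have eb2 : b₂.height = mb := by omega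
    have ec2 : c₂.height = mb := by omega
    have hR₁p : (node a₁ (node b₁ c₁)).IsPhylo := aux_urel_phylo hu1 h₁
    have hR₂p : (node a₂ (node b₂ c₂)).IsPhylo := aux_urel_phylo hu2 h₂
    obtain ⟨ha₁p, hbc₁p, hd1⟩ := aux_phylo_node hR₁p
    obtain ⟨hb₁p, hc₁p, hd1'⟩ := aux_phylo_node hbc₁p
    obtain ⟨ha₂p, hbc₂p, hd2⟩ := aux_phylo_node hR₂p
    obtain ⟨hb₂p, hc₂p, hd2'⟩ := aux_phylo_node hbc₂p
    have hXmem : ∀ x, x ∈ T₁.leafList.toFinset ↔ x ∈ T₁.leafList := by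
      intro x; simp
    have hmem1 : ∀ x ∈ T₁.leafList.toFinset, x ∈ (node a₁ (node b₁ c₁)).leafList :=
      fun x hx => (aux_urel_mem hu1).mpr ((hXmem x).mp hx)
    have hmem2 : ∀ x ∈ T₁.leafList.toFinset, x ∈ (node a₂ (node b₂ c₂)).leafList :=
      fun x hx => (aux_urel_mem hu2).mpr ((hLeq x).mp ((hXmem x).mp hx))
    have hor1 : ∀ x ∈ T₁.leafList.toFinset,
        x ∈ a₁.leafList ∨ x ∈ b₁.leafList ∨ x ∈ c₁.leafList := by
      intro x hx
      have := hmem1 x hx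
      simpa only [leafList, List.mem_append] using this
    have hor2 : ∀ x ∈ T₁.leafList.toFinset,
        x ∈ a₂.leafList ∨ x ∈ b₂.leafList ∨ x ∈ c₂.leafList := by
      intro x hx
      have := hmem2 x hx
      simpa only [leafList, List.mem_append] using this
    have hab1 : ∀ x, x ∈ a₁.leafList → ¬ x ∈ b₁.leafList := by
      intro x hx hb
      exact hd1 hx (by simp only [leafList, List.mem_append]; exact Or.inl hb)
    have hac1 : ∀ x, x ∈ a₁.leafList → ¬ x ∈ c₁.leafList := by
      intro x hx hb
      exact hd1 hx (by simp only [leafList, List.mem_append]; exact Or.inr hb)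
    have hbc1' : ∀ x, x ∈ b₁.leafList → ¬ x ∈ c₁.leafList := fun x hx hb => hd1' hx hb
    have hab2 : ∀ x, x ∈ a₂.leafList → ¬ x ∈ b₂.leafList := by
      intro x hx hb
      exact hd2 hx (by simp only [leafList, List.mem_append]; exact Or.inl hb)
    have hac2 : ∀ x, x ∈ a₂.leafList → ¬ x ∈ c₂.leafList := by
      intro x hx hb
      exact hd2 hx (by simp only [leafList, List.mem_append]; exact Or.inr hb)
    have hbc2' : ∀ x, x ∈ b₂.leafList → ¬ x ∈ c₂.leafList := fun x hx hb => hd2' hx hb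
    have hbrn : ∀ u : RTree L, u.IsBalanced → u.height = mb
        → u.leafList.length = 2^mb := by
      intro u hb hh
      have := aux_balanced_numLeaves hb
      rw [numLeaves] at this
      rw [this, hh]
    have hXcard : T₁.leafList.toFinset.card = 3 * 2^mb := by
      rw [List.toFinset_card_of_nodup h₁]
      have h1 : (node a₁ (node b₁ c₁)).numLeaves = T₁.leafList.length :=
        aux_urel_numLeaves hu1
      rw [← h1]
      simp only [numLeaves, leafList, List.length_append]
      rw [hbrn a₁ hba1 ea1, hbrn b₁ hbb1 eb1, hbrn c₁ hbc1 ec1]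
      ring
    -- split into nine cells
    have hrows : T₁.leafList.toFinset.card
        = (T₁.leafList.toFinset.filter (· ∈ a₁.leafList)).card
          + (T₁.leafList.toFinset.filter (· ∈ b₁.leafList)).card
          + (T₁.leafList.toFinset.filter (· ∈ c₁.leafList)).card :=
      aux_card_split3 _ _ _ _ hor1 (fun x _ => hab1 x) (fun x _ => hac1 x)
        (fun x _ => hbc1' x)
    have hcols : ∀ Y : Finset L, (∀ x ∈ Y, x ∈ T₁.leafList.toFinset) →
        Y.card = (Y.filter (· ∈ a₂.leafList)).card + (Y.filter (· ∈ b₂.leafList)).card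
          + (Y.filter (· ∈ c₂.leafList)).card := by
      intro Y hY
      exact aux_card_split3 _ _ _ _ (fun x hx => hor2 x (hY x hx))
        (fun x _ => hab2 x) (fun x _ => hac2 x) (fun x _ => hbc2' x)
    have hca := hcols (T₁.leafList.toFinset.filter (· ∈ a₁.leafList))
      (fun x hx => Finset.mem_of_mem_filter x hx)
    have hcb := hcols (T₁.leafList.toFinset.filter (· ∈ b₁.leafList))
      (fun x hx => Finset.mem_of_mem_filter x hx)
    have hcc := hcols (T₁.leafList.toFinset.filter (· ∈ c₁.leafList))
      (fun x hx => Finset.mem_of_mem_filter x hx)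
    -- pigeonhole over the nine cells
    have hpig : 3 * 2^mb ≤ 9 * ((T₁.leafList.toFinset.filter (· ∈ a₁.leafList)).filter (· ∈ a₂.leafList)).card
        ∨ 3 * 2^mb ≤ 9 * ((T₁.leafList.toFinset.filter (· ∈ a₁.leafList)).filter (· ∈ b₂.leafList)).card
        ∨ 3 * 2^mb ≤ 9 * ((T₁.leafList.toFinset.filter (· ∈ a₁.leafList)).filter (· ∈ c₂.leafList)).card
        ∨ 3 * 2^mb ≤ 9 * ((T₁.leafList.toFinset.filter (· ∈ b₁.leafList)).filter (· ∈ a₂.leafList)).card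
        ∨ 3 * 2^mb ≤ 9 * ((T₁.leafList.toFinset.filter (· ∈ b₁.leafList)).filter (· ∈ b₂.leafList)).card
        ∨ 3 * 2^mb ≤ 9 * ((T₁.leafList.toFinset.filter (· ∈ b₁.leafList)).filter (· ∈ c₂.leafList)).card
        ∨ 3 * 2^mb ≤ 9 * ((T₁.leafList.toFinset.filter (· ∈ c₁.leafList)).filter (· ∈ a₂.leafList)).card
        ∨ 3 * 2^mb ≤ 9 * ((T₁.leafList.toFinset.filter (· ∈ c₁.leafList)).filter (· ∈ b₂.leafList)).card
        ∨ 3 * 2^mb ≤ 9 * ((T₁.leafList.toFinset.filter (· ∈ c₁.leafList)).filter (· ∈ c₂.leafList)).card := by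
      omega
    -- rotated representatives
    have w1a : URel (node a₁ (node b₁ c₁)) T₁ := hu1
    have w1b : URel (node b₁ (node c₁ a₁)) T₁ :=
      aux_urel_trans (aux_urel_symm (aux_urel_rot a₁ b₁ c₁)) hu1
    have w1c : URel (node c₁ (node a₁ b₁)) T₁ :=
      aux_urel_trans (aux_urel_symm (aux_urel_rot b₁ c₁ a₁)) w1b
    have w2a : URel (node a₂ (node b₂ c₂)) T₂ := hu2
    have w2b : URel (node b₂ (node c₂ a₂)) T₂ :=
      aux_urel_trans (aux_urel_symm (aux_urel_rot a₂ b₂ c₂)) hu2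
    have w2c : URel (node c₂ (node a₂ b₂)) T₂ :=
      aux_urel_trans (aux_urel_symm (aux_urel_rot b₂ c₂ a₂)) w2b
    have goal_eq : 2*(mb+1) = 2*mb+2 := by ring
    rw [goal_eq]
    rcases hpig with h | h | h | h | h | h | h | h | h
    · exact aux_classC_sub δ hδ0 h7 mb T₁ T₂ a₁ b₁ c₁ a₂ b₂ c₂ h₁ h₂ w1a w2a
        hba1 hbb1 hbc1 hba2 hbb2 hbc2 ea1 eb1 ec1 ea2 eb2 ec2 hLeq h
    · exact aux_classC_sub δ hδ0 h7 mb T₁ T₂ a₁ b₁ c₁ b₂ c₂ a₂ h₁ h₂ w1a w2b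
        hba1 hbb1 hbc1 hbb2 hbc2 hba2 ea1 eb1 ec1 eb2 ec2 ea2 hLeq h
    · exact aux_classC_sub δ hδ0 h7 mb T₁ T₂ a₁ b₁ c₁ c₂ a₂ b₂ h₁ h₂ w1a w2c
        hba1 hbb1 hbc1 hbc2 hba2 hbb2 ea1 eb1 ec1 ec2 ea2 eb2 hLeq h
    · exact aux_classC_sub δ hδ0 h7 mb T₁ T₂ b₁ c₁ a₁ a₂ b₂ c₂ h₁ h₂ w1b w2a
        hbb1 hbc1 hba1 hba2 hbb2 hbc2 eb1 ec1 ea1 ea2 eb2 ec2 hLeq h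
    · exact aux_classC_sub δ hδ0 h7 mb T₁ T₂ b₁ c₁ a₁ b₂ c₂ a₂ h₁ h₂ w1b w2b
        hbb1 hbc1 hba1 hbb2 hbc2 hba2 eb1 ec1 ea1 eb2 ec2 ea2 hLeq h
    · exact aux_classC_sub δ hδ0 h7 mb T₁ T₂ b₁ c₁ a₁ c₂ a₂ b₂ h₁ h₂ w1b w2c
        hbb1 hbc1 hba1 hbc2 hba2 hbb2 eb1 ec1 ea1 ec2 ea2 eb2 hLeq h
    · exact aux_classC_sub δ hδ0 h7 mb T₁ T₂ c₁ a₁ b₁ a₂ b₂ c₂ h₁ h₂ w1c w2a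
        hbc1 hba1 hbb1 hba2 hbb2 hbc2 ec1 ea1 eb1 ea2 eb2 ec2 hLeq h
    · exact aux_classC_sub δ hδ0 h7 mb T₁ T₂ c₁ a₁ b₁ b₂ c₂ a₂ h₁ h₂ w1c w2b
        hbc1 hba1 hbb1 hbb2 hbc2 hba2 ec1 ea1 eb1 eb2 ec2 ea2 hLeq h
    · exact aux_classC_sub δ hδ0 h7 mb T₁ T₂ c₁ a₁ b₁ c₂ a₂ b₂ h₁ h₂ w1c w2c
        hbc1 hba1 hbb1 hbc2 hba2 hbb2 ec1 ea1 eb1 ec2 ea2 eb2 hLeq h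
end
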